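/- arXiv:2510.10838 — 3 statements merged into one kernel-verified Lean document; each statement's English description precedes it below -/
import Mathlib

section
/- Let G be a median graph and let d ≥ 1 be such that every set of pairwise transverse hyperplanes of G has at most d elements (G has dimension at most d). Then every finite set S of hyperplanes of G with |S| ≥ d + d(d+1) contains three hyperplanes that are pairwise disjoint. -/
/-- `m` is a median of `x`, `y`, `z` in the graph `G`. -/
def IsMedianOf {V : Type*} (G : SimpleGraph V) (m x y z : V) : Prop :=
  G.dist x y = G.dist x m + G.dist m y ∧
  G.dist y z = G.dist y m + G.dist m z ∧
  G.dist x z = G.dist x m + G.dist m z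

/-- A median graph: connected, and every triple of vertices has a unique median. -/
def MedianGraph {V : Type*} (G : SimpleGraph V) : Prop :=
  G.Connected ∧ ∀ x y z : V, ∃! m : V, IsMedianOf G m x y z

/-- Two edges are square-opposite: they are opposite sides of a 4-cycle. -/
def SquareOpposite {V : Type*} (G : SimpleGraph V) (e f : Sym2 V) : Prop :=
  ∃ a b c d : V, a ≠ b ∧ a ≠ c ∧ a ≠ d ∧ b ≠ c ∧ b ≠ d ∧ c ≠ d ∧
    G.Adj a b ∧ G.Adj c d ∧ G.Adj a c ∧ G.Adj b d ∧ e = s(a, b) ∧ f = s(c, d)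

/-- A hyperplane: an equivalence class of edges under the equivalence relation
generated by square-opposition. -/
def IsHyperplane {V : Type*} (G : SimpleGraph V) (H : Set (Sym2 V)) : Prop :=
  ∃ e ∈ G.edgeSet, H = {f | Relation.EqvGen (SquareOpposite G) e f}

/-- Two distinct hyperplanes are transverse if some 4-cycle contains an edge of each. -/
def Transverse {V : Type*} (G : SimpleGraph V) (H₁ H₂ : Set (Sym2 V)) : Prop :=
  H₁ ≠ H₂ ∧ ∃ a b c d : V, a ≠ b ∧ a ≠ c ∧ a ≠ d ∧ b ≠ c ∧ b ≠ d ∧ c ≠ d ∧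
    G.Adj a b ∧ G.Adj b c ∧ G.Adj c d ∧ G.Adj d a ∧
    (∃ e ∈ ({s(a, b), s(b, c), s(c, d), s(d, a)} : Set (Sym2 V)), e ∈ H₁) ∧
    (∃ e ∈ ({s(a, b), s(b, c), s(c, d), s(d, a)} : Set (Sym2 V)), e ∈ H₂)

/-- Two hyperplanes are disjoint if they are distinct and not transverse. -/
def DisjointHyp {V : Type*} (G : SimpleGraph V) (H₁ H₂ : Set (Sym2 V)) : Prop :=
  H₁ ≠ H₂ ∧ ¬ Transverse G H₁ H₂

private lemma transverse_symm {V : Type*} (G : SimpleGraph V) {H₁ H₂ : Set (Sym2 V)}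
    (h : Transverse G H₁ H₂) : Transverse G H₂ H₁ := by
  obtain ⟨hne, a, b, c, dd, h1, h2, h3, h4, h5, h6, h7, h8, h9, h10, he1, he2⟩ := h
  exact ⟨hne.symm, a, b, c, dd, h1, h2, h3, h4, h5, h6, h7, h8, h9, h10, he2, he1⟩

/-- In a median graph of dimension at most `d`, every finite family of at least
`d + d(d+1)` hyperplanes contains three pairwise disjoint hyperplanes. -/
theorem three_pairwise_disjoint_of_many_hyperplanes {V : Type*} (G : SimpleGraph V)
    (hG : MedianGraph G) (d : ℕ) (hd : 1 ≤ d)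
    (hdim : ∀ T : Set (Set (Sym2 V)), (∀ H ∈ T, IsHyperplane G H) →
      T.Pairwise (Transverse G) → T.Finite ∧ T.ncard ≤ d)
    (S : Finset (Set (Sym2 V))) (hS : ∀ H ∈ S, IsHyperplane G H)
    (hcard : d + d * (d + 1) ≤ S.card) :
    ∃ H₁ ∈ S, ∃ H₂ ∈ S, ∃ H₃ ∈ S,
      DisjointHyp G H₁ H₂ ∧ DisjointHyp G H₁ H₃ ∧ DisjointHyp G H₂ H₃ := by
  classical
  by_contra hcon
  -- For each A ∈ S, the set of hyperplanes in S disjoint from A is pairwise transverse,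
  -- hence has at most d elements.
  set N : Set (Sym2 V) → Finset (Set (Sym2 V)) :=
    fun A => S.filter (fun B => DisjointHyp G A B) with hN
  have hNcard : ∀ A ∈ S, (N A).card ≤ d := by
    intro A hA
    have hpw : (↑(N A) : Set (Set (Sym2 V))).Pairwise (Transverse G) := by
      intro B hB C hC hBC
      simp only [hN, Finset.coe_filter, Set.mem_setOf_eq] at hB hC
      by_contra hT
      exact hcon ⟨A, hA, B, hB.1, C, hC.1, hB.2, hC.2, hBC, hT⟩
    have := hdim (↑(N A)) (fun H hH => hS H (Finset.mem_of_mem_filter H hH)) hpw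
    simpa [Set.ncard_coe_finset] using this.2
  -- Take a pairwise-transverse subset C of S of maximum cardinality.
  set P : Finset (Set (Sym2 V)) → Prop :=
    fun t => (↑t : Set (Set (Sym2 V))).Pairwise (Transverse G) with hP
  have hne : (S.powerset.filter P).Nonempty := by
    refine ⟨∅, ?_⟩
    simp [hP]
  obtain ⟨C, hCmem, hCmax⟩ := Finset.exists_max_image (S.powerset.filter P) Finset.card hne
  simp only [Finset.mem_filter, Finset.mem_powerset] at hCmem
  obtain ⟨hCS, hCpw⟩ := hCmem
  -- C has at most d elements
  have hCd : C.card ≤ d := by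
    have := hdim (↑C) (fun H hH => hS H (hCS hH)) hCpw
    simpa [Set.ncard_coe_finset] using this.2
  -- every A ∈ S \ C is disjoint from some element of C
  have hcover : S \ C ⊆ C.biUnion N := by
    intro A hA
    rw [Finset.mem_sdiff] at hA
    by_cases hall : ∀ u ∈ C, Transverse G u A
    · exfalso
      have hins : (↑(insert A C) : Set (Set (Sym2 V))).Pairwise (Transverse G) := by
        intro x hx y hy hxy
        simp only [Finset.coe_insert, Set.mem_insert_iff, Finset.mem_coe] at hx hy
        rcases hx with rfl | hx
        · rcases hy with rfl | hy
          · exact absurd rfl hxy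
          · exact transverse_symm G (hall y hy)
        · rcases hy with rfl | hy
          · exact hall x hx
          · exact hCpw hx hy hxy
      have hmem : insert A C ∈ S.powerset.filter P := by
        simp only [Finset.mem_filter, Finset.mem_powerset, hP]
        exact ⟨Finset.insert_subset hA.1 hCS, hins⟩
      have := hCmax _ hmem
      rw [Finset.card_insert_of_notMem hA.2] at this
      omega
    · push_neg at hall
      obtain ⟨u, hu, hTu⟩ := hall
      have hne' : u ≠ A := fun h => hA.2 (h ▸ hu)
      refine Finset.mem_biUnion.2 ⟨u, hu, ?_⟩
      simp only [hN, Finset.mem_filter]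
      exact ⟨hA.1, hne', hTu⟩
  -- count
  have h1 : (S \ C).card ≤ C.card * d := by
    calc (S \ C).card ≤ (C.biUnion N).card := Finset.card_le_card hcover
      _ ≤ ∑ u ∈ C, (N u).card := Finset.card_biUnion_le
      _ ≤ ∑ _u ∈ C, d := Finset.sum_le_sum (fun u hu => hNcard u (hCS hu))
      _ = C.card * d := by simp [Finset.sum_const, mul_comm]
  have h2 : (S \ C).card = S.card - C.card := Finset.card_sdiff_of_subset hCS
  have h3 : C.card ≤ S.card := Finset.card_le_card hCS
  have h4 : S.card = C.card + (S \ C).card := by omega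
  nlinarith [h1, hCd, h4, hcard, hd]
end

section
/- Let G be a finitely generated group acting by automorphisms on a median graph 𝒢 of finite dimension, i.e., such that there is d ∈ ℕ with every set of pairwise transverse hyperplanes of 𝒢 having at most d elements. If every element of G fixes some vertex of 𝒢, then every G-orbit is bounded: for every vertex x there is N ∈ ℕ with dist(x, g·x) ≤ N for all g ∈ G. -/
set_option linter.unusedSectionVars false
set_option maxHeartbeats 1000000


namespace MedAux

variable {V : Type*} (𝒢 : SimpleGraph V)

/-- The halfspace of vertices strictly closer to `a` than to `b`. -/
def Side (a b : V) : Set V := {w | 𝒢.dist w a < 𝒢.dist w b}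

/-- The hyperplane class of an edge. -/
def cls (e : Sym2 V) : Set (Sym2 V) := {f | Relation.EqvGen (SquareOpposite 𝒢) e f}

variable {𝒢}

lemma mem_side {a b w : V} : w ∈ Side 𝒢 a b ↔ 𝒢.dist w a < 𝒢.dist w b := Iff.rfl

variable (hG : MedianGraph 𝒢)
include hG

lemma tri (u v w : V) : 𝒢.dist u w ≤ 𝒢.dist u v + 𝒢.dist v w := hG.1.dist_triangle

omit hG in
lemma dcomm (u v : V) : 𝒢.dist u v = 𝒢.dist v u := SimpleGraph.dist_comm

lemma dist_adj {u v : V} (h : 𝒢.Adj u v) : 𝒢.dist u v = 1 :=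
  SimpleGraph.dist_eq_one_iff_adj.mpr h

lemma eq_of_dist_eq_zero {u v : V} (h : 𝒢.dist u v = 0) : u = v :=
  (hG.1.dist_eq_zero_iff).mp h

/-- Dichotomy: every vertex is strictly closer to one endpoint of an edge. -/
lemma side_cases {a b : V} (hab : 𝒢.Adj a b) (w : V) :
    𝒢.dist w b = 𝒢.dist w a + 1 ∨ 𝒢.dist w a = 𝒢.dist w b + 1 := by
  obtain ⟨m, hm, -⟩ := hG.2 a w b
  obtain ⟨h1, h2, h3⟩ := hm
  rw [dist_adj hG hab] at h3
  rcases Nat.add_eq_one_iff.mp h3.symm with ⟨ha, hb⟩ | ⟨ha, hb⟩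
  · -- m = a
    have hma : a = m := eq_of_dist_eq_zero hG ha
    rw [← hma] at h2 hb
    left
    omega
  · -- m = b
    have hmb : m = b := eq_of_dist_eq_zero hG hb
    rw [hmb] at h1 ha
    have c1 : 𝒢.dist a w = 𝒢.dist w a := dcomm a w
    have c2 : 𝒢.dist b w = 𝒢.dist w b := dcomm b w
    right
    omega

lemma mem_side_iff {a b w : V} (hab : 𝒢.Adj a b) :
    w ∈ Side 𝒢 a b ↔ 𝒢.dist w b = 𝒢.dist w a + 1 := by
  rcases side_cases hG hab w with h | h <;> constructor <;> intro h' <;>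
    simp only [mem_side] at * <;> omega

lemma side_or {a b : V} (hab : 𝒢.Adj a b) (w : V) :
    w ∈ Side 𝒢 a b ∨ w ∈ Side 𝒢 b a := by
  rcases side_cases hG hab w with h | h
  · left; simp only [mem_side]; omega
  · right; simp only [mem_side]; omega

lemma side_not_mem {a b w : V} (h : w ∈ Side 𝒢 a b) : w ∉ Side 𝒢 b a := by
  simp only [mem_side] at *; omega

lemma side_compl {a b : V} (hab : 𝒢.Adj a b) : Side 𝒢 b a = (Side 𝒢 a b)ᶜ := by
  ext w
  constructor
  · intro h; exact side_not_mem hG h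
  · intro h; rcases side_or hG hab w with h' | h'
    · exact absurd h' h
    · exact h'

lemma mem_side_self {a b : V} (hab : 𝒢.Adj a b) : a ∈ Side 𝒢 a b := by
  simp only [mem_side, SimpleGraph.dist_self, dist_adj hG hab]; omega

/-- Exists a neighbour one step closer. -/
lemma exists_step {u v : V} {n : ℕ} (h : 𝒢.dist u v = n + 1) :
    ∃ w, 𝒢.Adj u w ∧ 𝒢.dist w v = n := by
  obtain ⟨p, hp⟩ := hG.1.exists_walk_length_eq_dist u v
  cases p with
  | nil => rw [SimpleGraph.dist_self] at h; omega
  | cons hadj q =>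
    rename_i w
    refine ⟨w, hadj, ?_⟩
    have h1 : 𝒢.dist w v ≤ q.length := SimpleGraph.dist_le q
    have h2 : q.length = n := by
      simpa [SimpleGraph.Walk.length_cons, h] using hp
    have h3 : 𝒢.dist u v ≤ 𝒢.dist u w + 𝒢.dist w v := tri hG u w v
    have h4 : 𝒢.dist u w = 1 := dist_adj hG hadj
    omega

/-- A walk from inside `S` to outside `S` has a crossing edge. -/
lemma exists_crossing {S : Set V} : ∀ {u v : V} (p : 𝒢.Walk u v), u ∈ S → v ∉ S →
    ∃ x y, 𝒢.Adj x y ∧ x ∈ S ∧ y ∉ S ∧ s(x, y) ∈ p.edges := by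
  intro u v p
  induction p with
  | nil => intro h h'; exact absurd h h'
  | cons hadj q ih =>
    rename_i u' w' v'
    intro hu hv
    by_cases hw : w' ∈ S
    · obtain ⟨x, y, h1, h2, h3, h4⟩ := ih hw hv
      exact ⟨x, y, h1, h2, h3, by simp [SimpleGraph.Walk.edges_cons, h4]⟩
    · exact ⟨u', w', hadj, hu, hw, by simp [SimpleGraph.Walk.edges_cons]⟩

/-- On a geodesic walk, every support vertex is between the endpoints. -/
lemma between_of_mem_support {u v : V} (p : 𝒢.Walk u v) (hp : p.length = 𝒢.dist u v)
    {t : V} (ht : t ∈ p.support) : 𝒢.dist u t + 𝒢.dist t v = 𝒢.dist u v := by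
  classical
  have hsplit := SimpleGraph.Walk.take_spec p ht
  have hlen : (p.takeUntil t ht).length + (p.dropUntil t ht).length = p.length := by
    rw [← SimpleGraph.Walk.length_append, hsplit]
  have h1 : 𝒢.dist u t ≤ (p.takeUntil t ht).length := SimpleGraph.dist_le _
  have h2 : 𝒢.dist t v ≤ (p.dropUntil t ht).length := SimpleGraph.dist_le _
  have h3 : 𝒢.dist u v ≤ 𝒢.dist u t + 𝒢.dist t v := tri hG u t v
  omega


/-- The ladder lemma: an edge crossing the wall of `(a,b)` lies in the class of `s(a,b)`. -/
lemma edge_in_cls {a b : V} (hab : 𝒢.Adj a b) :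
    ∀ k, ∀ p q : V, 𝒢.Adj p q → 𝒢.dist p a = k → p ∈ Side 𝒢 a b → q ∈ Side 𝒢 b a →
      Relation.EqvGen (SquareOpposite 𝒢) s(a, b) s(p, q) := by
  intro k
  induction k with
  | zero =>
    intro p q hpq hk hp hq
    have hpa : p = a := eq_of_dist_eq_zero hG hk
    subst hpa
    have h1 : 𝒢.dist q p = 𝒢.dist q b + 1 := (mem_side_iff hG hab.symm).mp hq
    have h2 : 𝒢.dist q p ≤ 1 := by rw [dcomm]; exact le_of_eq (dist_adj hG hpq)
    have h3 : q = b := eq_of_dist_eq_zero hG (by omega)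
    subst h3
    exact Relation.EqvGen.refl _
  | succ k ih =>
    intro p q hpq hk hp hq
    have hpb : 𝒢.dist p b = k + 2 := by
      have := (mem_side_iff hG hab).mp hp; omega
    have hqa' : 𝒢.dist q a = 𝒢.dist q b + 1 := (mem_side_iff hG hab.symm).mp hq
    have hqa_le : 𝒢.dist q a ≤ k + 2 := by
      have h1 := tri hG q p a
      have h2 : 𝒢.dist q p = 1 := by rw [dcomm]; exact dist_adj hG hpq
      omega
    have hqb_ge : 𝒢.dist q b ≥ k + 1 := by
      have h1 := tri hG p q b
      have h2 := dist_adj hG hpq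
      omega
    have hqb : 𝒢.dist q b = k + 1 := by omega
    have hqa : 𝒢.dist q a = k + 2 := by omega
    obtain ⟨p', hpp', hp'a⟩ := exists_step hG hk
    have hp'b : 𝒢.dist p' b = k + 1 := by
      have h1 := tri hG p' a b
      have h2 := tri hG p p' b
      have h3 := dist_adj hG hab
      have h4 := dist_adj hG hpp'
      have c1 : 𝒢.dist p p' = 𝒢.dist p' p := dcomm _ _
      omega
    have hp' : p' ∈ Side 𝒢 a b := by simp only [mem_side]; omega
    have hp'q : 𝒢.dist p' q = 2 := by
      have hne : p' ≠ q := by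
        intro h; rw [h] at hp'a; omega
      have hnadj : ¬ 𝒢.Adj p' q := by
        intro h
        have c1 : 𝒢.dist a p' = 𝒢.dist p' a := dcomm _ _
        have c2 : 𝒢.dist a q = 𝒢.dist q a := dcomm _ _
        rcases side_cases hG h a with h' | h' <;> omega
      have hle : 𝒢.dist p' q ≤ 2 := by
        have h1 := tri hG p' p q
        have h2 : 𝒢.dist p' p = 1 := by rw [dcomm]; exact dist_adj hG hpp'
        have h3 := dist_adj hG hpq
        omega
      have h0 : 𝒢.dist p' q ≠ 0 := fun h => hne (eq_of_dist_eq_zero hG h)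
      have h1 : 𝒢.dist p' q ≠ 1 := fun h => hnadj (SimpleGraph.dist_eq_one_iff_adj.mp h)
      omega
    -- median q' of (p', q, b)
    obtain ⟨q', hq'spec, -⟩ := hG.2 p' q b
    obtain ⟨m1, m2, m3⟩ := hq'spec
    have c1 : 𝒢.dist q q' = 𝒢.dist q' q := dcomm _ _
    have hne1 : 𝒢.dist p' q' ≠ 0 := by
      intro h
      have h' : p' = q' := eq_of_dist_eq_zero hG h
      rw [← h'] at m2
      have c2 : 𝒢.dist q p' = 𝒢.dist p' q := dcomm _ _
      omega
    have hne2 : 𝒢.dist q' q ≠ 0 := by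
      intro h
      have h' : q' = q := eq_of_dist_eq_zero hG h
      rw [h'] at m3
      omega
    have hd1 : 𝒢.dist p' q' = 1 := by omega
    have hd2 : 𝒢.dist q' q = 1 := by omega
    have hq'b : 𝒢.dist q' b = k := by omega
    have hq'a : 𝒢.dist q' a ≥ k + 1 := by
      have t1 := tri hG q q' a
      omega
    have hq' : q' ∈ Side 𝒢 b a := by simp only [mem_side]; omega
    have hadjp'q' : 𝒢.Adj p' q' := SimpleGraph.dist_eq_one_iff_adj.mp hd1
    have hadjq'q : 𝒢.Adj q' q := SimpleGraph.dist_eq_one_iff_adj.mp hd2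
    have step := ih p' q' hadjp'q' hp'a hp' hq'
    refine Relation.EqvGen.trans _ _ _ step (Relation.EqvGen.rel _ _ ?_)
    refine ⟨p', q', p, q, hadjp'q'.ne, hpp'.ne.symm, ?_, ?_, hadjq'q.ne, hpq.ne, hadjp'q', hpq,
      hpp'.symm, hadjq'q, rfl, rfl⟩
    · intro h; rw [h] at hp'q; rw [SimpleGraph.dist_self] at hp'q; omega
    · intro h; rw [h] at hq'b; omega

/-- Opposite edges of a square bound equal sides (one inclusion). -/
lemma square_side_subset {α β γ δ : V} (hab : 𝒢.Adj α β) (hcd : 𝒢.Adj γ δ)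
    (hac : 𝒢.Adj α γ) (hbd : 𝒢.Adj β δ) (hbc : β ≠ γ) (had : α ≠ δ) :
    Side 𝒢 α β ⊆ Side 𝒢 γ δ := by
  intro w hw
  by_contra hcon
  have hwdg : w ∈ Side 𝒢 δ γ := (side_or hG hcd w).resolve_left hcon
  set r := 𝒢.dist w α with hr
  have hwb : 𝒢.dist w β = r + 1 := (mem_side_iff hG hab).mp hw
  have hwg : 𝒢.dist w γ = 𝒢.dist w δ + 1 := (mem_side_iff hG hcd.symm).mp hwdg
  have h1 : 𝒢.dist w γ ≤ r + 1 := by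
    have := tri hG w α γ; have := dist_adj hG hac; omega
  have h2 : 𝒢.dist w δ ≥ r := by
    have := tri hG w δ β
    have h3 : 𝒢.dist δ β = 1 := by rw [dcomm]; exact dist_adj hG hbd
    omega
  have hwds : 𝒢.dist w δ = r := by omega
  have hwgr : 𝒢.dist w γ = r + 1 := by omega
  have hr1 : r ≥ 1 := by
    rcases Nat.eq_zero_or_pos r with h | h
    · exfalso
      have hwa : w = α := eq_of_dist_eq_zero hG (by omega)
      have hwd : w = δ := eq_of_dist_eq_zero hG (by omega)
      exact had (hwa ▸ hwd ▸ rfl)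
    · omega
  have hadj_ad : ¬ 𝒢.Adj α δ := by
    intro h
    have e1 : 𝒢.dist β α = 1 := by rw [dcomm]; exact dist_adj hG hab
    have e2 : 𝒢.dist β δ = 1 := dist_adj hG hbd
    rcases side_cases hG h β with h' | h' <;> omega
  have hdad : 𝒢.dist α δ = 2 := by
    have hle : 𝒢.dist α δ ≤ 2 := by
      have := tri hG α β δ; have := dist_adj hG hab; have := dist_adj hG hbd; omega
    have h0 : 𝒢.dist α δ ≠ 0 := fun h => had (eq_of_dist_eq_zero hG h)
    have h1' : 𝒢.dist α δ ≠ 1 := fun h => hadj_ad (SimpleGraph.dist_eq_one_iff_adj.mp h)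
    omega
  -- median u of (α, w, δ)
  obtain ⟨u, huspec, -⟩ := hG.2 α w δ
  obtain ⟨m1, m2, m3⟩ := huspec
  -- m1 : dist α w = dist α u + dist u w
  -- m2 : dist w δ = dist w u + dist u δ
  -- m3 : dist α δ = dist α u + dist u δ
  have cαw : 𝒢.dist α w = 𝒢.dist w α := dcomm _ _
  have cwu : 𝒢.dist w u = 𝒢.dist u w := dcomm _ _
  have hua : 𝒢.dist α u ≠ 0 := by
    intro h
    have h' : α = u := eq_of_dist_eq_zero hG h
    rw [← h'] at m2
    have c2 : 𝒢.dist w α = 𝒢.dist α w := dcomm _ _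
    omega
  have hud : 𝒢.dist u δ ≠ 0 := by
    intro h
    have h' : u = δ := eq_of_dist_eq_zero hG h
    rw [h'] at m1
    have c2 : 𝒢.dist δ w = 𝒢.dist w δ := dcomm _ _
    omega
  have hua1 : 𝒢.dist α u = 1 := by omega
  have hud1 : 𝒢.dist u δ = 1 := by omega
  have hwu : 𝒢.dist u w = r - 1 := by omega
  have hub : u ≠ β := by
    intro h; rw [h] at hwu
    have c2 : 𝒢.dist β w = 𝒢.dist w β := dcomm _ _
    omega
  have hug : u ≠ γ := by
    intro h; rw [h] at hwu
    have c2 : 𝒢.dist γ w = 𝒢.dist w γ := dcomm _ _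
    omega
  have haub : 𝒢.Adj α u := SimpleGraph.dist_eq_one_iff_adj.mp hua1
  have hdu : 𝒢.Adj u δ := SimpleGraph.dist_eq_one_iff_adj.mp hud1
  have dist2 : ∀ x y x' : V, 𝒢.Adj x' x → 𝒢.Adj x' y → x ≠ y → 𝒢.dist x y = 2 := by
    intro x y x' h1 h2 hne
    have hnadj : ¬ 𝒢.Adj x y := by
      intro h
      have e1 : 𝒢.dist x' x = 1 := dist_adj hG h1
      have e2 : 𝒢.dist x' y = 1 := dist_adj hG h2
      rcases side_cases hG h x' with h' | h' <;> omega
    have hle : 𝒢.dist x y ≤ 2 := by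
      have t1 := tri hG x x' y
      have e1 : 𝒢.dist x x' = 1 := by rw [dcomm]; exact dist_adj hG h1
      have e2 : 𝒢.dist x' y = 1 := dist_adj hG h2
      omega
    have h0 : 𝒢.dist x y ≠ 0 := fun h => hne (eq_of_dist_eq_zero hG h)
    have h1' : 𝒢.dist x y ≠ 1 := fun h => hnadj (SimpleGraph.dist_eq_one_iff_adj.mp h)
    omega
  have dbg : 𝒢.dist β γ = 2 := dist2 β γ α hab hac hbc
  have dgu : 𝒢.dist γ u = 2 := dist2 γ u δ hcd.symm hdu.symm (fun h => hug h.symm)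
  have dbu : 𝒢.dist β u = 2 := dist2 β u α hab haub (fun h => hub h.symm)
  have e1 : 𝒢.dist β α = 1 := by rw [dcomm]; exact dist_adj hG hab
  have e2 : 𝒢.dist α γ = 1 := dist_adj hG hac
  have e3 : 𝒢.dist α u = 1 := hua1
  have e5 : 𝒢.dist β δ = 1 := dist_adj hG hbd
  have e6 : 𝒢.dist δ γ = 1 := by rw [dcomm]; exact dist_adj hG hcd
  have e7 : 𝒢.dist δ u = 1 := by rw [dcomm]; exact hud1
  have cga : 𝒢.dist γ α = 𝒢.dist α γ := dcomm _ _
  have cgd : 𝒢.dist γ δ = 𝒢.dist δ γ := dcomm _ _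
  have hmedα : IsMedianOf 𝒢 α β γ u := ⟨by omega, by omega, by omega⟩
  have hmedδ : IsMedianOf 𝒢 δ β γ u := ⟨by omega, by omega, by omega⟩
  exact had ((hG.2 β γ u).unique hmedα hmedδ)

lemma square_side_eq {α β γ δ : V} (hab : 𝒢.Adj α β) (hcd : 𝒢.Adj γ δ)
    (hac : 𝒢.Adj α γ) (hbd : 𝒢.Adj β δ) (hbc : β ≠ γ) (had : α ≠ δ) :
    Side 𝒢 α β = Side 𝒢 γ δ :=
  le_antisymm (square_side_subset hG hab hcd hac hbd hbc had)
    (square_side_subset hG hcd hab hac.symm hbd.symm had.symm hbc.symm)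

section WallSet

variable (𝒢) in
/-- The unordered pair of halfspaces of an edge. -/
def wallSet (e : Sym2 V) : Set (Set V) :=
  Sym2.lift ⟨fun a b => {Side 𝒢 a b, Side 𝒢 b a}, fun a b => by simp [Set.pair_comm]⟩ e

omit hG in
lemma wallSet_mk (a b : V) : wallSet 𝒢 s(a, b) = {Side 𝒢 a b, Side 𝒢 b a} := rfl

omit hG in
lemma cls_swap (a b : V) : cls 𝒢 s(a, b) = cls 𝒢 s(b, a) := by rw [Sym2.eq_swap]

omit hG in
lemma mem_cls_self (e : Sym2 V) : e ∈ cls 𝒢 e := Relation.EqvGen.refl e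

omit hG in
lemma cls_eq_of_mem {e f : Sym2 V} (h : f ∈ cls 𝒢 e) : cls 𝒢 f = cls 𝒢 e := by
  ext x
  constructor
  · intro hx; exact Relation.EqvGen.trans _ _ _ h hx
  · intro hx
    exact Relation.EqvGen.trans _ _ _ (Relation.EqvGen.symm _ _ h) hx

lemma wallSet_eq_of_eqvGen {e f : Sym2 V} (h : Relation.EqvGen (SquareOpposite 𝒢) e f) :
    wallSet 𝒢 e = wallSet 𝒢 f := by
  induction h with
  | rel x y hxy =>
    obtain ⟨a, b, c, d, hab2, hac2, had2, hbc2, hbd2, hcd2, hab, hcd, hac, hbd, hx, hy⟩ := hxy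
    subst hx; subst hy
    rw [wallSet_mk, wallSet_mk]
    have h1 : Side 𝒢 a b = Side 𝒢 c d := square_side_eq hG hab hcd hac hbd hbc2 had2
    have h2 : Side 𝒢 b a = Side 𝒢 d c :=
      square_side_eq hG hab.symm hcd.symm hbd hac had2 hbc2
    rw [h1, h2]
  | refl x => rfl
  | symm x y _ ih => exact ih.symm
  | trans x y z _ _ ih1 ih2 => exact ih1.trans ih2

lemma wallSet_eq_of_cls_eq {e f : Sym2 V} (h : cls 𝒢 e = cls 𝒢 f) :
    wallSet 𝒢 e = wallSet 𝒢 f := by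
  have : f ∈ cls 𝒢 e := h ▸ mem_cls_self f
  exact wallSet_eq_of_eqvGen hG this

/-- For adjacent `a b`, `c d` with equal classes, the side pair coincides. -/
lemma side_pair_cases {a b c d : V} (hab : 𝒢.Adj a b) (hcd : 𝒢.Adj c d)
    (h : cls 𝒢 s(a, b) = cls 𝒢 s(c, d)) :
    (Side 𝒢 c d = Side 𝒢 a b ∧ Side 𝒢 d c = Side 𝒢 b a) ∨
    (Side 𝒢 c d = Side 𝒢 b a ∧ Side 𝒢 d c = Side 𝒢 a b) := by
  have hw := wallSet_eq_of_cls_eq hG h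
  rw [wallSet_mk, wallSet_mk] at hw
  have hmem : Side 𝒢 c d ∈ ({Side 𝒢 a b, Side 𝒢 b a} : Set (Set V)) := by
    rw [hw]; left; rfl
  rcases hmem with h1 | h1
  · left
    refine ⟨h1, ?_⟩
    rw [side_compl hG hcd, h1, side_compl hG hab]
  · simp only [Set.mem_singleton_iff] at h1
    right
    refine ⟨h1, ?_⟩
    rw [side_compl hG hcd, h1, side_compl hG hab, compl_compl]

end WallSet

section Sep

variable (𝒢) in
/-- The set of hyperplane classes separating `u` from `v`. -/
def SepCls (u v : V) : Set (Set (Sym2 V)) :=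
  {C | ∃ a b : V, 𝒢.Adj a b ∧ C = cls 𝒢 s(a, b) ∧ u ∈ Side 𝒢 a b ∧ v ∈ Side 𝒢 b a}

lemma sepCls_finite_card {u v : V} :
    (SepCls 𝒢 u v).Finite ∧ (SepCls 𝒢 u v).ncard ≤ 𝒢.dist u v := by
  classical
  obtain ⟨p, hp⟩ := hG.1.exists_walk_length_eq_dist u v
  have hsub : SepCls 𝒢 u v ⊆ (cls 𝒢) '' (↑p.edges.toFinset : Set (Sym2 V)) := by
    rintro C ⟨a, b, hab, hC, hu, hv⟩
    have hv' : v ∉ Side 𝒢 a b := side_not_mem hG hv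
    obtain ⟨x, y, hxy, hxS, hyS, hmem⟩ := exists_crossing hG p hu hv'
    have hy' : y ∈ Side 𝒢 b a := (side_or hG hab y).resolve_left hyS
    have hcls := edge_in_cls hG hab (𝒢.dist x a) x y hxy rfl hxS hy'
    refine ⟨s(x, y), by simpa using hmem, ?_⟩
    rw [cls_eq_of_mem hcls, hC]
  have hfin : (SepCls 𝒢 u v).Finite :=
    Set.Finite.subset (Set.Finite.image _ (Set.toFinite _)) hsub
  refine ⟨hfin, ?_⟩
  calc (SepCls 𝒢 u v).ncard ≤ ((cls 𝒢) '' (↑p.edges.toFinset : Set (Sym2 V))).ncard :=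
        Set.ncard_le_ncard hsub (Set.Finite.image _ (Set.toFinite _))
    _ ≤ (↑p.edges.toFinset : Set (Sym2 V)).ncard := Set.ncard_image_le (Set.toFinite _)
    _ = p.edges.toFinset.card := Set.ncard_coe_finset _
    _ ≤ p.edges.length := p.edges.toFinset_card_le
    _ = p.length := p.length_edges
    _ = 𝒢.dist u v := hp

lemma sepCls_finite {u v : V} : (SepCls 𝒢 u v).Finite := (sepCls_finite_card hG).1

lemma sepCls_card_le {u v : V} : (SepCls 𝒢 u v).ncard ≤ 𝒢.dist u v :=
  (sepCls_finite_card hG).2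

/-- A class separating `u` from an adjacent `w` is the class of the edge. -/
lemma sepCls_adj {u w : V} (huw : 𝒢.Adj u w) {C : Set (Sym2 V)}
    (hC : C ∈ SepCls 𝒢 u w) : C = cls 𝒢 s(u, w) := by
  obtain ⟨a, b, hab, hCe, hu, hw⟩ := hC
  have := edge_in_cls hG hab (𝒢.dist u a) u w huw rfl hu hw
  rw [hCe, ← cls_eq_of_mem this]

lemma dist_le_sepCls_ncard : ∀ n : ℕ, ∀ u v : V, 𝒢.dist u v = n →
    n ≤ (SepCls 𝒢 u v).ncard := by
  intro n
  induction n with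
  | zero => intro u v _; omega
  | succ n ih =>
    intro u v hn
    obtain ⟨w, huw, hwv⟩ := exists_step hG hn
    set C₀ := cls 𝒢 s(u, w) with hC₀
    have hw1 : 𝒢.dist u w = 1 := dist_adj hG huw
    have huuw : u ∈ Side 𝒢 u w := by
      simp only [mem_side, SimpleGraph.dist_self]; omega
    have hvwu : v ∈ Side 𝒢 w u := by
      simp only [mem_side]
      have c1 : 𝒢.dist v w = 𝒢.dist w v := dcomm _ _
      have c2 : 𝒢.dist v u = 𝒢.dist u v := dcomm _ _
      omega
    have hC₀mem : C₀ ∈ SepCls 𝒢 u v := ⟨u, w, huw, rfl, huuw, hvwu⟩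
    have hwmem : w ∈ Side 𝒢 w u := by
      simp only [mem_side, SimpleGraph.dist_self]
      have c1 : 𝒢.dist w u = 𝒢.dist u w := dcomm _ _
      omega
    have hC₀notmem : C₀ ∉ SepCls 𝒢 w v := by
      rintro ⟨a, b, hab, hCe, hwS, hvS⟩
      have hEq : cls 𝒢 s(u, w) = cls 𝒢 s(a, b) := by rw [← hC₀]; exact hCe
      rcases side_pair_cases hG huw hab hEq with ⟨h1, h2⟩ | ⟨h1, h2⟩
      · rw [h1] at hwS
        exact side_not_mem hG hwS hwmem
      · rw [h2] at hvS
        exact side_not_mem hG hvS hvwu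
    have hsub : SepCls 𝒢 w v ⊆ SepCls 𝒢 u v := by
      rintro C ⟨a, b, hab, hCe, hwS, hvS⟩
      rcases side_or hG hab u with hu | hu
      · exact ⟨a, b, hab, hCe, hu, hvS⟩
      · exfalso
        have : s(w, u) ∈ cls 𝒢 s(a, b) :=
          edge_in_cls hG hab (𝒢.dist w a) w u huw.symm rfl hwS hu
        have hCeq : C = C₀ := by
          rw [hCe, ← cls_eq_of_mem this, hC₀, cls_swap]
        exact hC₀notmem (hCeq ▸ ⟨a, b, hab, hCe, hwS, hvS⟩)
    have hins : insert C₀ (SepCls 𝒢 w v) ⊆ SepCls 𝒢 u v := by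
      rw [Set.insert_subset_iff]; exact ⟨hC₀mem, hsub⟩
    have hfin : (SepCls 𝒢 u v).Finite := sepCls_finite hG
    have hcard : (insert C₀ (SepCls 𝒢 w v)).ncard = (SepCls 𝒢 w v).ncard + 1 :=
      Set.ncard_insert_of_notMem hC₀notmem (sepCls_finite hG)
    have hle : (insert C₀ (SepCls 𝒢 w v)).ncard ≤ (SepCls 𝒢 u v).ncard :=
      Set.ncard_le_ncard hins hfin
    have := ih w v hwv
    omega

lemma sepCls_ncard_eq {u v : V} : (SepCls 𝒢 u v).ncard = 𝒢.dist u v :=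
  le_antisymm (sepCls_card_le hG) (dist_le_sepCls_ncard hG _ u v rfl)

/-- Halfspaces are convex. -/
lemma side_convex {a b : V} (hab : 𝒢.Adj a b) {u v z : V}
    (hu : u ∈ Side 𝒢 a b) (hv : v ∈ Side 𝒢 a b)
    (hz : 𝒢.dist u z + 𝒢.dist z v = 𝒢.dist u v) : z ∈ Side 𝒢 a b := by
  by_contra hcon
  have hz' : z ∈ Side 𝒢 b a := (side_or hG hab z).resolve_left hcon
  set C₀ := cls 𝒢 s(a, b) with hC₀
  have hmem1 : C₀ ∈ SepCls 𝒢 u z := ⟨a, b, hab, rfl, hu, hz'⟩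
  have hmem2 : C₀ ∈ SepCls 𝒢 z v := by
    refine ⟨b, a, hab.symm, ?_, hz', hv⟩
    rw [hC₀, cls_swap]
  have hnotmem : C₀ ∉ SepCls 𝒢 u v := by
    rintro ⟨c, d, hcd, hCe, huS, hvS⟩
    have hEq : cls 𝒢 s(a, b) = cls 𝒢 s(c, d) := by rw [← hC₀]; exact hCe
    rcases side_pair_cases hG hab hcd hEq with ⟨h1, h2⟩ | ⟨h1, h2⟩
    · rw [h2] at hvS
      exact side_not_mem hG hv hvS
    · rw [h1] at huS
      exact side_not_mem hG hu huS
  have hsub : SepCls 𝒢 u v ⊆ (SepCls 𝒢 u z \ {C₀}) ∪ SepCls 𝒢 z v := by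
    rintro C ⟨c, d, hcd, hCe, huS, hvS⟩
    have hCne : C ≠ C₀ := fun h => hnotmem (h ▸ ⟨c, d, hcd, hCe, huS, hvS⟩)
    rcases side_or hG hcd z with hzS | hzS
    · right; exact ⟨c, d, hcd, hCe, hzS, hvS⟩
    · left; exact ⟨⟨c, d, hcd, hCe, huS, hzS⟩, by simpa using hCne⟩
  have hf1 : (SepCls 𝒢 u z).Finite := sepCls_finite hG
  have hf2 : (SepCls 𝒢 z v).Finite := sepCls_finite hG
  have hcard : (SepCls 𝒢 u v).ncard ≤ (SepCls 𝒢 u z \ {C₀}).ncard + (SepCls 𝒢 z v).ncard := by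
    calc (SepCls 𝒢 u v).ncard ≤ ((SepCls 𝒢 u z \ {C₀}) ∪ SepCls 𝒢 z v).ncard :=
          Set.ncard_le_ncard hsub (Set.Finite.union hf1.diff hf2)
      _ ≤ _ := Set.ncard_union_le _ _
  have hdiff : (SepCls 𝒢 u z \ {C₀}).ncard = (SepCls 𝒢 u z).ncard - 1 :=
    Set.ncard_diff_singleton_of_mem hmem1
  have hpos : 0 < (SepCls 𝒢 u z).ncard := (Set.ncard_pos hf1).mpr ⟨C₀, hmem1⟩
  have e1 := sepCls_ncard_eq hG (u := u) (v := v)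
  have e2 := sepCls_ncard_eq hG (u := u) (v := z)
  have e3 := sepCls_ncard_eq hG (u := z) (v := v)
  omega

/-- Vertices strictly between endpoints of a geodesic subsegment compose. -/
lemma between_trans {u m r t : V}
    (h1 : 𝒢.dist u m + 𝒢.dist m r = 𝒢.dist u r)
    (h2 : 𝒢.dist u t + 𝒢.dist t m = 𝒢.dist u m) :
    𝒢.dist u t + 𝒢.dist t r = 𝒢.dist u r := by
  have t1 := tri hG t m r
  have t2 := tri hG u t r
  omega

/-- Crossing walls are transverse. -/
lemma transverse_of_crossing {a₁ b₁ a₂ b₂ : V} (h1 : 𝒢.Adj a₁ b₁) (h2 : 𝒢.Adj a₂ b₂)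
    (hne : cls 𝒢 s(a₁, b₁) ≠ cls 𝒢 s(a₂, b₂))
    (hP : (Side 𝒢 a₁ b₁ ∩ Side 𝒢 a₂ b₂).Nonempty)
    (hA : (Side 𝒢 a₁ b₁ ∩ Side 𝒢 b₂ a₂).Nonempty)
    (hB : (Side 𝒢 b₁ a₁ ∩ Side 𝒢 a₂ b₂).Nonempty)
    (hQ : (Side 𝒢 b₁ a₁ ∩ Side 𝒢 b₂ a₂).Nonempty) :
    Transverse 𝒢 (cls 𝒢 s(a₁, b₁)) (cls 𝒢 s(a₂, b₂)) := by
  classical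
  set W₁ := Side 𝒢 a₁ b₁
  set W₁' := Side 𝒢 b₁ a₁
  set W₂ := Side 𝒢 a₂ b₂
  set W₂' := Side 𝒢 b₂ a₂
  -- minimal mixed pair
  set 𝒩 : Set ℕ := {n | ∃ q r : V, q ∈ W₁ ∩ W₂' ∧ r ∈ W₁' ∩ W₂ ∧ 𝒢.dist q r = n} with h𝒩
  have h𝒩ne : 𝒩.Nonempty := by
    obtain ⟨q₀, hq₀⟩ := hA
    obtain ⟨r₀, hr₀⟩ := hB
    exact ⟨𝒢.dist q₀ r₀, q₀, r₀, hq₀, hr₀, rfl⟩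
  set n₀ := sInf 𝒩 with hn₀
  obtain ⟨q, r, ⟨hqW₁, hqW₂'⟩, ⟨hrW₁', hrW₂⟩, hdqr⟩ := Nat.sInf_mem h𝒩ne
  rw [← hn₀] at hdqr
  have hmin : ∀ q' r' : V, q' ∈ W₁ → q' ∈ W₂' → r' ∈ W₁' → r' ∈ W₂ →
      n₀ ≤ 𝒢.dist q' r' := by
    intro q' r' hq1 hq2 hr1 hr2
    exact Nat.sInf_le ⟨q', r', ⟨hq1, hq2⟩, ⟨hr1, hr2⟩, rfl⟩
  -- n₀ ≥ 2
  have hn2 : 2 ≤ n₀ := by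
    by_contra hlt
    push_neg at hlt
    have h0 : 𝒢.dist q r = 0 ∨ 𝒢.dist q r = 1 := by omega
    rcases h0 with h0 | h0
    · exact side_not_mem hG hqW₁ (eq_of_dist_eq_zero hG h0 ▸ hrW₁')
    · have hadj : 𝒢.Adj q r := SimpleGraph.dist_eq_one_iff_adj.mp h0
      have e1 : s(q, r) ∈ cls 𝒢 s(a₁, b₁) :=
        edge_in_cls hG h1 (𝒢.dist q a₁) q r hadj rfl hqW₁ hrW₁'
      have e2 : s(r, q) ∈ cls 𝒢 s(a₂, b₂) :=
        edge_in_cls hG h2 (𝒢.dist r a₂) r q hadj.symm rfl hrW₂ hqW₂'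
      apply hne
      rw [← cls_eq_of_mem e1, ← cls_eq_of_mem e2, cls_swap]
  -- construct z₁ via a median with P
  obtain ⟨pP, hpP₁, hpP₂⟩ := hP
  obtain ⟨m, hmspec, -⟩ := hG.2 q r pP
  obtain ⟨mm1, mm2, mm3⟩ := hmspec
  -- mm1 : dist q r = dist q m + dist m r ; mm2 : dist r pP = dist r m + dist m pP
  -- mm3 : dist q pP = dist q m + dist m pP
  have hmW₁ : m ∈ W₁ := side_convex hG h1 hqW₁ hpP₁ mm3.symm
  have hmW₂ : m ∈ W₂ := by
    refine side_convex hG h2 hrW₂ hpP₂ ?_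
    have c1 : 𝒢.dist r m = 𝒢.dist m r := dcomm _ _
    omega
  have hqm : q ≠ m := fun h => side_not_mem hG hmW₂ (h ▸ hqW₂')
  obtain ⟨pw, hpw⟩ := hG.1.exists_walk_length_eq_dist q m
  have hcross : ∃ x y, 𝒢.Adj x y ∧ x ∈ W₂' ∧ y ∉ W₂' ∧ s(x, y) ∈ pw.edges :=
    exists_crossing hG pw hqW₂' (side_not_mem hG hmW₂)
  obtain ⟨x, y, hxy, hxW₂', hyW₂', hexy⟩ := hcross
  have hyW₂ : y ∈ W₂ := (side_or hG h2 y).resolve_right hyW₂'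
  have hxsup : x ∈ pw.support := pw.fst_mem_support_of_mem_edges hexy
  have hysup : y ∈ pw.support := pw.snd_mem_support_of_mem_edges hexy
  have hxbet : 𝒢.dist q x + 𝒢.dist x m = 𝒢.dist q m := between_of_mem_support hG pw hpw hxsup
  have hybet : 𝒢.dist q y + 𝒢.dist y m = 𝒢.dist q m := between_of_mem_support hG pw hpw hysup
  have hxbetr : 𝒢.dist q x + 𝒢.dist x r = 𝒢.dist q r := between_trans hG mm1.symm hxbet
  have hybetr : 𝒢.dist q y + 𝒢.dist y r = 𝒢.dist q r := between_trans hG mm1.symm hybet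
  have hxW₁ : x ∈ W₁ := side_convex hG h1 hqW₁ hmW₁ hxbet
  have hyW₁ : y ∈ W₁ := side_convex hG h1 hqW₁ hmW₁ hybet
  have hxq : x = q := by
    have := hmin x r hxW₁ hxW₂' hrW₁' hrW₂
    have : 𝒢.dist q x = 0 := by omega
    exact (eq_of_dist_eq_zero hG this).symm
  subst hxq
  set z₁ := y with hz₁
  have hqz₁ : 𝒢.Adj x z₁ := hxy
  have hdz₁r : 𝒢.dist z₁ r = n₀ - 1 := by
    have e1 : 𝒢.dist x z₁ = 1 := dist_adj hG hqz₁
    omega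
  have hez₁ : s(z₁, x) ∈ cls 𝒢 s(a₂, b₂) :=
    edge_in_cls hG h2 (𝒢.dist z₁ a₂) z₁ x hqz₁.symm rfl hyW₂ hxW₂'
  -- construct u'' via a median with Q
  obtain ⟨oQ, hoQ₁, hoQ₂⟩ := hQ
  obtain ⟨c, hcspec, -⟩ := hG.2 x r oQ
  obtain ⟨cc1, cc2, cc3⟩ := hcspec
  have hcW₂' : c ∈ W₂' := side_convex hG h2.symm hxW₂' hoQ₂ cc3.symm
  have hcW₁' : c ∈ W₁' := by
    refine side_convex hG h1.symm hrW₁' hoQ₁ ?_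
    have c1 : 𝒢.dist r c = 𝒢.dist c r := dcomm _ _
    omega
  have hxc : x ≠ c := fun h => side_not_mem hG hxW₁ (h ▸ hcW₁')
  obtain ⟨pw2, hpw2⟩ := hG.1.exists_walk_length_eq_dist x c
  obtain ⟨x2, y2, hxy2, hx2W₁, hy2W₁, hexy2⟩ :=
    exists_crossing hG (S := W₁) pw2 hxW₁ (side_not_mem hG hcW₁')
  have hy2W₁' : y2 ∈ W₁' := (side_or hG h1 y2).resolve_left hy2W₁
  have hx2sup : x2 ∈ pw2.support := pw2.fst_mem_support_of_mem_edges hexy2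
  have hy2sup : y2 ∈ pw2.support := pw2.snd_mem_support_of_mem_edges hexy2
  have hx2bet : 𝒢.dist x x2 + 𝒢.dist x2 c = 𝒢.dist x c :=
    between_of_mem_support hG pw2 hpw2 hx2sup
  have hy2bet : 𝒢.dist x y2 + 𝒢.dist y2 c = 𝒢.dist x c :=
    between_of_mem_support hG pw2 hpw2 hy2sup
  have hx2betr : 𝒢.dist x x2 + 𝒢.dist x2 r = 𝒢.dist x r := between_trans hG cc1.symm hx2bet
  have hy2betr : 𝒢.dist x y2 + 𝒢.dist y2 r = 𝒢.dist x r := between_trans hG cc1.symm hy2bet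
  have hx2W₂' : x2 ∈ W₂' := side_convex hG h2.symm hxW₂' hcW₂' hx2bet
  have hy2W₂' : y2 ∈ W₂' := side_convex hG h2.symm hxW₂' hcW₂' hy2bet
  have hx2q : x2 = x := by
    have := hmin x2 r hx2W₁ hx2W₂' hrW₁' hrW₂
    have : 𝒢.dist x x2 = 0 := by omega
    exact (eq_of_dist_eq_zero hG this).symm
  subst hx2q
  set u'' := y2 with hu''
  have hqu'' : 𝒢.Adj x2 u'' := hxy2
  have hdu''r : 𝒢.dist u'' r = n₀ - 1 := by
    have e1 : 𝒢.dist x2 u'' = 1 := dist_adj hG hqu''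
    omega
  have heu'' : s(x2, u'') ∈ cls 𝒢 s(a₁, b₁) :=
    edge_in_cls hG h1 (𝒢.dist x2 a₁) x2 u'' hqu'' rfl hx2W₁ hy2W₁'
  -- z₁ ≠ u'' and dist 2
  have hz₁u''ne : z₁ ≠ u'' := fun h => side_not_mem hG hyW₂ (h ▸ hy2W₂')
  have hz₁u''nadj : ¬ 𝒢.Adj z₁ u'' := by
    intro h
    have e1 : 𝒢.dist x2 z₁ = 1 := dist_adj hG hqz₁
    have e2 : 𝒢.dist x2 u'' = 1 := dist_adj hG hqu''
    rcases side_cases hG h x2 with h' | h' <;> omega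
  have hdz₁u'' : 𝒢.dist z₁ u'' = 2 := by
    have hle : 𝒢.dist z₁ u'' ≤ 2 := by
      have t1 := tri hG z₁ x2 u''
      have e1 : 𝒢.dist z₁ x2 = 1 := by rw [dcomm]; exact dist_adj hG hqz₁
      have e2 : 𝒢.dist x2 u'' = 1 := dist_adj hG hqu''
      omega
    have h0 : 𝒢.dist z₁ u'' ≠ 0 := fun h => hz₁u''ne (eq_of_dist_eq_zero hG h)
    have h1' : 𝒢.dist z₁ u'' ≠ 1 := fun h => hz₁u''nadj (SimpleGraph.dist_eq_one_iff_adj.mp h)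
    omega
  -- median μ of (z₁, u'', r)
  obtain ⟨μ, hμspec, -⟩ := hG.2 z₁ u'' r
  obtain ⟨k1, k2, k3⟩ := hμspec
  -- k1 : dist z₁ u'' = dist z₁ μ + dist μ u''
  -- k2 : dist u'' r = dist u'' μ + dist μ r
  -- k3 : dist z₁ r = dist z₁ μ + dist μ r
  have cμ : 𝒢.dist u'' μ = 𝒢.dist μ u'' := dcomm _ _
  have hμ1 : 𝒢.dist z₁ μ ≠ 0 := by
    intro h
    have h' : z₁ = μ := eq_of_dist_eq_zero hG h
    rw [← h'] at k2
    have c2 : 𝒢.dist u'' z₁ = 𝒢.dist z₁ u'' := dcomm _ _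
    omega
  have hμ2 : 𝒢.dist μ u'' ≠ 0 := by
    intro h
    have h' : μ = u'' := eq_of_dist_eq_zero hG h
    rw [h'] at k3
    omega
  have hdz₁μ : 𝒢.dist z₁ μ = 1 := by omega
  have hdμu'' : 𝒢.dist μ u'' = 1 := by omega
  have hdμr : 𝒢.dist μ r = n₀ - 2 := by omega
  have hadjz₁μ : 𝒢.Adj z₁ μ := SimpleGraph.dist_eq_one_iff_adj.mp hdz₁μ
  have hadjμu'' : 𝒢.Adj μ u'' := SimpleGraph.dist_eq_one_iff_adj.mp hdμu''
  -- assemble the 4-cycle (x2=q, z₁, μ, u'')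
  refine ⟨hne, x2, z₁, μ, u'', hqz₁.ne, ?_, hqu''.ne, hadjz₁μ.ne, hz₁u''ne, hadjμu''.ne,
    hqz₁, hadjz₁μ, hadjμu'', hqu''.symm, ?_, ?_⟩
  · -- x2 ≠ μ
    intro h
    rw [← h] at hdμr
    omega
  · refine ⟨s(u'', x2), by simp, ?_⟩
    have hsw : s(u'', x2) = s(x2, u'') := Sym2.eq_swap
    rw [hsw]; exact heu''
  · refine ⟨s(x2, z₁), by simp, ?_⟩
    have hsw : s(x2, z₁) = s(z₁, x2) := Sym2.eq_swap
    rw [hsw]; exact hez₁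

end Sep

section Action

variable {Γ : Type*} [Group Γ] [MulAction Γ V]
variable (hact : ∀ (g : Γ) (u v : V), 𝒢.Adj u v ↔ 𝒢.Adj (g • u) (g • v))
include hact

lemma dist_smul_le (g : Γ) (u v : V) : 𝒢.dist (g • u) (g • v) ≤ 𝒢.dist u v := by
  obtain ⟨p, hp⟩ := hG.1.exists_walk_length_eq_dist u v
  let f : 𝒢 →g 𝒢 := ⟨fun w => g • w, fun h => (hact g _ _).mp h⟩
  have h := SimpleGraph.dist_le (p.map f)
  rwa [SimpleGraph.Walk.length_map, hp] at h

lemma dist_smul (g : Γ) (u v : V) : 𝒢.dist (g • u) (g • v) = 𝒢.dist u v := by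
  refine le_antisymm (dist_smul_le hG hact g u v) ?_
  have h := dist_smul_le hG hact g⁻¹ (g • u) (g • v)
  simpa using h

lemma mem_side_smul {g : Γ} {a b : V} (w : V) :
    w ∈ Side 𝒢 (g • a) (g • b) ↔ g⁻¹ • w ∈ Side 𝒢 a b := by
  simp only [mem_side]
  rw [← dist_smul hG hact g (g⁻¹ • w) a, ← dist_smul hG hact g (g⁻¹ • w) b, smul_inv_smul]

lemma no_skewer_aux (γ : Γ) (a b : V) (hab : 𝒢.Adj a b) (v : V) (hv : γ • v = v)
    (hvS : v ∈ Side 𝒢 a b)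
    (hsub : Side 𝒢 (γ • a) (γ • b) ⊆ Side 𝒢 a b)
    (hne : Side 𝒢 (γ • a) (γ • b) ≠ Side 𝒢 a b) : False := by
  set Sm : ℕ → Set V := fun m => Side 𝒢 (γ ^ m • a) (γ ^ m • b) with hSm
  have hadjm : ∀ m : ℕ, 𝒢.Adj (γ ^ m • a) (γ ^ m • b) := fun m => (hact (γ ^ m) a b).mp hab
  have hfix : ∀ m : ℕ, γ ^ m • v = v := by
    intro m
    induction m with
    | zero => simp
    | succ m ih => rw [pow_succ, mul_smul, hv, ih]
  have hfixinv : ∀ m : ℕ, (γ ^ m)⁻¹ • v = v := by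
    intro m
    rw [inv_smul_eq_iff, hfix]
  have hmem_iff : ∀ (m : ℕ) (w : V), w ∈ Sm m ↔ (γ ^ m)⁻¹ • w ∈ Side 𝒢 a b := by
    intro m w
    rw [hSm]
    exact mem_side_smul hG hact w
  have hsucc_iff : ∀ (m : ℕ) (w : V), w ∈ Sm (m + 1) ↔ (γ ^ m)⁻¹ • w ∈ Side 𝒢 (γ • a) (γ • b) := by
    intro m w
    have h1 : γ ^ (m + 1) • a = γ ^ m • (γ • a) := by rw [pow_succ, mul_smul]
    have h2 : γ ^ (m + 1) • b = γ ^ m • (γ • b) := by rw [pow_succ, mul_smul]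
    rw [hSm]
    simp only
    rw [h1, h2]
    exact mem_side_smul hG hact w
  have hstep : ∀ m : ℕ, Sm (m + 1) ⊆ Sm m := by
    intro m w hw
    rw [hsucc_iff] at hw
    rw [hmem_iff]
    exact hsub hw
  have hstepne : ∀ m : ℕ, Sm (m + 1) ≠ Sm m := by
    intro m heq
    apply hne
    ext w
    have e1 : γ ^ m • w ∈ Sm (m + 1) ↔ w ∈ Side 𝒢 (γ • a) (γ • b) := by
      rw [hsucc_iff]; rw [inv_smul_smul]
    have e2 : γ ^ m • w ∈ Sm m ↔ w ∈ Side 𝒢 a b := by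
      rw [hmem_iff]; rw [inv_smul_smul]
    rw [← e1, ← e2, heq]
  have hmono : ∀ m k : ℕ, Sm (m + k) ⊆ Sm m := by
    intro m k
    induction k with
    | zero => exact le_refl _
    | succ k ih => exact le_trans (hstep (m + k)) ih
  have hstrict : ∀ m m' : ℕ, m < m' → Sm m' ≠ Sm m := by
    intro m m' hlt heq
    apply hstepne m
    apply le_antisymm
    · exact hstep m
    · rw [← heq]
      have : m' = (m + 1) + (m' - m - 1) := by omega
      rw [this]
      exact hmono (m + 1) (m' - m - 1)
  have hvmem : ∀ m : ℕ, v ∈ Sm m := by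
    intro m
    rw [hmem_iff, hfixinv]
    exact hvS
  have hS0 : Sm 0 = Side 𝒢 a b := by
    rw [hSm]; simp
  have hbnot : ∀ m : ℕ, b ∉ Sm m := by
    intro m hb
    have : b ∈ Sm 0 := by
      have : m = 0 + m := by omega
      rw [this] at hb
      exact hmono 0 m hb
    rw [hS0] at this
    exact side_not_mem hG this (mem_side_self hG hab.symm)
  have hCmem : ∀ m : ℕ, cls 𝒢 s(γ ^ m • a, γ ^ m • b) ∈ SepCls 𝒢 v b := by
    intro m
    refine ⟨γ ^ m • a, γ ^ m • b, hadjm m, rfl, hvmem m, ?_⟩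
    exact (side_or hG (hadjm m) b).resolve_left (hbnot m)
  have hCinj : Function.Injective (fun m : ℕ => cls 𝒢 s(γ ^ m • a, γ ^ m • b)) := by
    intro m m' heq
    simp only at heq
    by_contra hne'
    have key : ∀ m m' : ℕ, m < m' →
        cls 𝒢 s(γ ^ m • a, γ ^ m • b) = cls 𝒢 s(γ ^ m' • a, γ ^ m' • b) → False := by
      intro m m' hlt heq'
      rcases side_pair_cases hG (hadjm m) (hadjm m') heq' with ⟨h1, h2⟩ | ⟨h1, h2⟩
      · exact hstrict m m' hlt h1
      · have hv1 : v ∈ Side 𝒢 (γ ^ m' • b) (γ ^ m' • a) := by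
          rw [h2]; exact hvmem m
        exact side_not_mem hG (hvmem m') hv1
    rcases Nat.lt_or_ge m m' with h | h
    · exact key m m' h heq
    · exact key m' m (by omega) heq.symm
  have hinf : (SepCls 𝒢 v b).Infinite :=
    Set.infinite_of_injective_forall_mem hCinj hCmem
  exact hinf (sepCls_finite hG)

lemma no_skewer (γ : Γ) (a b : V) (hab : 𝒢.Adj a b) (v : V) (hv : γ • v = v)
    (hsub : Side 𝒢 (γ • a) (γ • b) ⊆ Side 𝒢 a b)
    (hne : Side 𝒢 (γ • a) (γ • b) ≠ Side 𝒢 a b) : False := by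
  rcases side_or hG hab v with hvS | hvS
  · exact no_skewer_aux hG hact γ a b hab v hv hvS hsub hne
  · have hv' : γ⁻¹ • v = v := by rw [inv_smul_eq_iff, hv]
    have hsub' : Side 𝒢 (γ⁻¹ • b) (γ⁻¹ • a) ⊆ Side 𝒢 b a := by
      intro w hw
      rw [mem_side_smul hG hact, inv_inv] at hw
      by_contra hcon
      have hwab : w ∈ Side 𝒢 a b := (side_or hG hab w).resolve_right hcon
      have : γ • w ∈ Side 𝒢 (γ • a) (γ • b) := by
        rw [mem_side_smul hG hact, inv_smul_smul]
        exact hwab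
      exact side_not_mem hG (hsub this) hw
    have hne' : Side 𝒢 (γ⁻¹ • b) (γ⁻¹ • a) ≠ Side 𝒢 b a := by
      intro heq
      apply hne
      have hadjinv : 𝒢.Adj (γ⁻¹ • a) (γ⁻¹ • b) := (hact γ⁻¹ a b).mp hab
      have hc : Side 𝒢 (γ⁻¹ • a) (γ⁻¹ • b) = Side 𝒢 a b := by
        have e1 : Side 𝒢 (γ⁻¹ • b) (γ⁻¹ • a) = (Side 𝒢 (γ⁻¹ • a) (γ⁻¹ • b))ᶜ :=
          side_compl hG hadjinv
        have e2 : Side 𝒢 b a = (Side 𝒢 a b)ᶜ := side_compl hG hab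
        rw [e1, e2] at heq
        exact compl_injective heq
      ext w
      constructor
      · intro hw
        rw [mem_side_smul hG hact] at hw
        have : γ⁻¹ • w ∈ Side 𝒢 (γ⁻¹ • a) (γ⁻¹ • b) := by rw [hc]; exact hw
        rw [mem_side_smul hG hact, inv_inv, smul_inv_smul] at this
        exact this
      · intro hw
        rw [mem_side_smul hG hact]
        rw [← hc, mem_side_smul hG hact, inv_inv, smul_inv_smul]
        exact hw
    exact no_skewer_aux hG hact γ⁻¹ b a hab.symm v hv' hvS hsub' hne'

end Action

section Walks

lemma dist_getVert_le {u v : V} (p : 𝒢.Walk u v) : ∀ i, 𝒢.dist u (p.getVert i) ≤ i := by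
  induction p with
  | nil =>
    intro i
    rw [SimpleGraph.Walk.getVert_of_length_le _ (by simp), SimpleGraph.dist_self]
    omega
  | cons h q ih =>
    rename_i a b c
    intro i
    cases i with
    | zero => rw [SimpleGraph.Walk.getVert_zero, SimpleGraph.dist_self]
    | succ i =>
      rw [SimpleGraph.Walk.getVert_cons_succ]
      have h1 := ih i
      have t := tri hG a b (q.getVert i)
      have := dist_adj hG h
      omega

lemma dist_getVert_le' {u v : V} (p : 𝒢.Walk u v) : ∀ i, 𝒢.dist (p.getVert i) v ≤ p.length - i := by
  induction p with
  | nil =>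
    intro i
    rw [SimpleGraph.Walk.getVert_of_length_le _ (by simp), SimpleGraph.dist_self]
    omega
  | cons h q ih =>
    rename_i a b c
    intro i
    cases i with
    | zero =>
      rw [SimpleGraph.Walk.getVert_zero]
      have := SimpleGraph.dist_le (SimpleGraph.Walk.cons h q)
      simpa using this
    | succ i =>
      rw [SimpleGraph.Walk.getVert_cons_succ]
      have h1 := ih i
      have : (SimpleGraph.Walk.cons h q).length = q.length + 1 := by simp
      omega

lemma getVert_dists {u v : V} (p : 𝒢.Walk u v) (hp : p.length = 𝒢.dist u v) {i : ℕ}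
    (hi : i ≤ p.length) :
    𝒢.dist u (p.getVert i) = i ∧ 𝒢.dist (p.getVert i) v = p.length - i := by
  have h1 := dist_getVert_le hG p i
  have h2 := dist_getVert_le' hG p i
  have t := tri hG u (p.getVert i) v
  constructor <;> omega

lemma getVert_dist_sub {u v : V} (p : 𝒢.Walk u v) (hp : p.length = 𝒢.dist u v)
    {i j : ℕ} (hij : i ≤ j) (hj : j ≤ p.length) :
    𝒢.dist (p.getVert i) (p.getVert j) = j - i := by
  have hle : ∀ a k, a + k ≤ p.length → 𝒢.dist (p.getVert a) (p.getVert (a + k)) ≤ k := by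
    intro a k
    induction k with
    | zero => intro _; simp [SimpleGraph.dist_self]
    | succ k ih =>
      intro hk
      show 𝒢.dist (p.getVert a) (p.getVert (a + k + 1)) ≤ k + 1
      have t := tri hG (p.getVert a) (p.getVert (a + k)) (p.getVert (a + k + 1))
      have hadj : 𝒢.Adj (p.getVert (a + k)) (p.getVert (a + k + 1)) :=
        p.adj_getVert_succ (by omega)
      have e1 := dist_adj hG hadj
      have e2 := ih (by omega)
      omega
  have hij' : 𝒢.dist (p.getVert i) (p.getVert j) ≤ j - i := by
    have := hle i (j - i) (by omega)
    have e : i + (j - i) = j := by omega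
    rwa [e] at this
  have e1 := getVert_dists hG p hp (le_trans hij hj)
  have e2 := getVert_dists hG p hp hj
  have t := tri hG (p.getVert i) (p.getVert j) v
  have t2 := tri hG (p.getVert i) v (p.getVert j)  -- unused
  have t3 := tri hG u (p.getVert i) (p.getVert j)  -- unused
  omega

end Walks

section Mirsky

variable {κ : Type*}

attribute [local instance] Classical.propDecidable

noncomputable def ht (W : ℕ → Set κ) : ℕ → ℕ
  | i =>
    (((Finset.range i).attach.filter (fun j => W i < W j.1)).sup
      (fun j => ht W j.1)) + 1
decreasing_by exact Finset.mem_range.mp j.2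

omit hG in
lemma ht_pos (W : ℕ → Set κ) (i : ℕ) : 1 ≤ ht W i := by
  rw [ht]
  omega

omit hG in
lemma ht_lt (W : ℕ → Set κ) {i j : ℕ} (hj : j < i) (hW : W i < W j) : ht W j < ht W i := by
  conv_rhs => rw [ht]
  have hmem : (⟨j, Finset.mem_range.mpr hj⟩ : {x // x ∈ Finset.range i}) ∈
      ((Finset.range i).attach.filter (fun j => W i < W j.1)) := by
    refine Finset.mem_filter.mpr ⟨Finset.mem_attach _ _, hW⟩
  have hle : ht W j ≤ ((Finset.range i).attach.filter (fun j => W i < W j.1)).sup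
      (fun j => ht W j.1) := Finset.le_sup (f := fun j => ht W j.1) hmem
  omega

omit hG in
lemma ht_chain (W : ℕ → Set κ) : ∀ i : ℕ, ∃ l : List ℕ,
    l.head? = some i ∧ l.length = ht W i ∧
    List.Chain' (fun p q => q < p ∧ W p < W q) l ∧ ∀ j ∈ l, j ≤ i := by
  intro i
  induction i using Nat.strong_induction_on with
  | _ i ih =>
    by_cases hex : ∃ j, j < i ∧ W i < W j
    · obtain ⟨j₀, hj₀, hsup⟩ := Finset.exists_mem_eq_sup
        ((Finset.range i).attach.filter (fun j => W i < W j.1))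
        (by
          obtain ⟨j, hj, hW⟩ := hex
          refine ⟨⟨j, Finset.mem_range.mpr hj⟩,
            Finset.mem_filter.mpr ⟨Finset.mem_attach _ _, ?_⟩⟩
          exact hW)
        (fun j => ht W j.1)
      have hj₀lt : (j₀ : ℕ) < i := Finset.mem_range.mp j₀.2
      have hj₀W : W i < W j₀.1 := (Finset.mem_filter.mp hj₀).2
      obtain ⟨l', hhead, hlen, hchain, hbd⟩ := ih j₀.1 hj₀lt
      cases l' with
      | nil => simp at hhead
      | cons a rest =>
        have ha : a = j₀.1 := by simpa using hhead
        subst ha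
        refine ⟨i :: j₀.1 :: rest, rfl, ?_, ?_, ?_⟩
        · have : ht W i = ((Finset.range i).attach.filter (fun j => W i < W j.1)).sup
              (fun j => ht W j.1) + 1 := by rw [ht]
          rw [this, hsup, ← hlen]
          simp
        · exact List.IsChain.cons_cons ⟨hj₀lt, hj₀W⟩ hchain
        · intro j hj
          rcases List.mem_cons.mp hj with hj1 | hj1
          · omega
          · have h2 := hbd j hj1
            have h3 : (j₀ : ℕ) < i := hj₀lt
            omega
    · push_neg at hex
      refine ⟨[i], rfl, ?_, List.isChain_singleton i, ?_⟩
      swap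
      · intro j hj
        simp only [List.mem_singleton] at hj
        omega
      have hempty : ((Finset.range i).attach.filter (fun j => W i < W j.1)) = ∅ := by
        refine Finset.filter_eq_empty_iff.mpr ?_
        intro j _
        exact fun hW => absurd hW (by
          have := hex j.1 (Finset.mem_range.mp j.2)
          simpa using this)
      rw [ht, hempty]
      simp

omit hG in
lemma exists_high (W : ℕ → Set κ) (D dd F : ℕ)
    (hlevel : ∀ t, ((Finset.range D).filter (fun i => ht W i = t)).card ≤ dd)
    (hD : dd * F < D) : ∃ i, i < D ∧ F < ht W i := by
  classical
  have hD0 : 0 < D := by omega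
  set K := (Finset.range D).sup (ht W) with hK
  have hcover : Finset.range D ⊆
      (Finset.Icc 1 K).biUnion (fun t => (Finset.range D).filter (fun i => ht W i = t)) := by
    intro i hi
    refine Finset.mem_biUnion.mpr ⟨ht W i, ?_, Finset.mem_filter.mpr ⟨hi, rfl⟩⟩
    refine Finset.mem_Icc.mpr ⟨ht_pos W i, Finset.le_sup hi⟩
  have hcard : D ≤ K * dd := by
    calc D = (Finset.range D).card := (Finset.card_range D).symm
      _ ≤ ((Finset.Icc 1 K).biUnion
            (fun t => (Finset.range D).filter (fun i => ht W i = t))).card :=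
          Finset.card_le_card hcover
      _ ≤ ∑ t ∈ Finset.Icc 1 K,
            ((Finset.range D).filter (fun i => ht W i = t)).card :=
          Finset.card_biUnion_le
      _ ≤ ∑ _t ∈ Finset.Icc 1 K, dd := Finset.sum_le_sum (fun t _ => hlevel t)
      _ = (Finset.Icc 1 K).card * dd := by rw [Finset.sum_const, smul_eq_mul]
      _ = K * dd := by rw [Nat.card_Icc, Nat.add_sub_cancel]
  have hFK : F < K := by
    by_contra hc
    push_neg at hc
    have : K * dd ≤ F * dd := Nat.mul_le_mul_right dd hc
    have : dd * F = F * dd := Nat.mul_comm _ _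
    omega
  obtain ⟨i, hi, hival⟩ := Finset.exists_mem_eq_sup (Finset.range D)
    ⟨0, Finset.mem_range.mpr hD0⟩ (ht W)
  exact ⟨i, Finset.mem_range.mp hi, by rw [← hK] at hival; omega⟩

end Mirsky

omit hG in
lemma transverse_symm {H₁ H₂ : Set (Sym2 V)} (h : Transverse 𝒢 H₁ H₂) : Transverse 𝒢 H₂ H₁ := by
  obtain ⟨hne, a, b, c, d, h1, h2, h3, h4, h5, h6, a1, a2, a3, a4, e1, e2⟩ := h
  exact ⟨hne.symm, a, b, c, d, h1, h2, h3, h4, h5, h6, a1, a2, a3, a4, e2, e1⟩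

omit hG in
lemma pairwise_two {R : ℕ → ℕ → Prop} :
    ∀ {l : List ℕ} {a b : ℕ}, l.Pairwise R → a ∈ l → b ∈ l → a ≠ b → R a b ∨ R b a := by
  intro l
  induction l with
  | nil => intro a b _ ha; simp at ha
  | cons x rest ih =>
    intro a b hp ha hb hne
    rcases List.mem_cons.mp ha with ha1 | ha1
    · rcases List.mem_cons.mp hb with hb1 | hb1
      · exact absurd (ha1.trans hb1.symm) hne
      · subst ha1
        exact Or.inl ((List.pairwise_cons.mp hp).1 b hb1)
    · rcases List.mem_cons.mp hb with hb1 | hb1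
      · subst hb1
        exact Or.inr ((List.pairwise_cons.mp hp).1 a ha1)
      · exact ih (List.pairwise_cons.mp hp).2 ha1 hb1 hne

omit hG in
lemma exists_flip {P : ℕ → Prop} : ∀ {L : ℕ}, ¬ P 0 → P L → ∃ j, j < L ∧ ¬ P j ∧ P (j + 1) := by
  intro L
  induction L with
  | zero => intro h0 hL; exact absurd hL h0
  | succ L ih =>
    intro h0 hL
    by_cases hPL : P L
    · obtain ⟨j, hj, h1, h2⟩ := ih h0 hPL
      exact ⟨j, by omega, h1, h2⟩
    · exact ⟨L, by omega, hPL, hL⟩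

end MedAux

/-- A finitely generated group acting purely elliptically on a finite dimensional
median graph has all its orbits bounded. -/
theorem purely_elliptic_bounded_orbits_finite_dim {V : Type*} (𝒢 : SimpleGraph V)
    (hG : MedianGraph 𝒢) (d : ℕ)
    (hdim : ∀ T : Set (Set (Sym2 V)), (∀ H ∈ T, IsHyperplane 𝒢 H) →
      T.Pairwise (Transverse 𝒢) → T.Finite ∧ T.ncard ≤ d)
    {Γ : Type*} [Group Γ] [Group.FG Γ] [MulAction Γ V]
    (hact : ∀ (g : Γ) (u v : V), 𝒢.Adj u v ↔ 𝒢.Adj (g • u) (g • v))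
    (hell : ∀ g : Γ, ∃ v : V, g • v = v) :
    ∀ x : V, ∃ N : ℕ, ∀ g : Γ, 𝒢.dist x (g • x) ≤ N := by
  classical
  open MedAux in
  intro x
  obtain ⟨S, hS⟩ : ∃ S : Finset Γ, Subgroup.closure (S : Set Γ) = ⊤ := Group.FG.out
  set S2 : Finset Γ := S ∪ S.image (·⁻¹) with hS2
  set F₀ : ℕ := ∑ s ∈ S2, 𝒢.dist x (s • x) with hF₀
  refine ⟨d * F₀, fun g => ?_⟩
  by_contra hbig
  push_neg at hbig
  -- word representation of g
  have hg : g ∈ Submonoid.closure ((S : Set Γ) ∪ (S : Set Γ)⁻¹) := by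
    have h1 : g ∈ Subgroup.closure (S : Set Γ) := by rw [hS]; trivial
    have h2 : g ∈ (Subgroup.closure (S : Set Γ)).toSubmonoid := h1
    rw [Subgroup.closure_toSubmonoid] at h2
    exact h2
  obtain ⟨lst, hlstmem, hlstprod⟩ := Submonoid.exists_list_of_mem_closure hg
  have hmemS2 : ∀ y ∈ lst, y ∈ S2 := by
    intro y hy
    rcases hlstmem y hy with h | h
    · exact Finset.mem_union_left _ h
    · refine Finset.mem_union_right _ ?_
      refine Finset.mem_image.mpr ⟨y⁻¹, ?_, inv_inv y⟩
      exact Set.mem_inv.mp h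
  set pfx : ℕ → Γ := fun j => (lst.take j).prod with hpfx
  have hpfx0 : pfx 0 • x = x := by rw [hpfx]; simp
  have hpfxL : pfx lst.length • x = g • x := by
    rw [hpfx]; simp only [List.take_length, hlstprod]
  have hpfxstep : ∀ j (hj : j < lst.length), pfx (j + 1) = pfx j * lst.get ⟨j, hj⟩ := by
    intro j hj
    rw [hpfx]
    exact List.prod_take_succ lst j hj
  -- geodesic from x to g • x
  set D : ℕ := 𝒢.dist x (g • x) with hD
  obtain ⟨p, hp⟩ := hG.1.exists_walk_length_eq_dist x (g • x)
  rw [← hD] at hp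
  set w : ℕ → V := fun i => p.getVert i with hw
  have hwD : w D = g • x := by
    rw [hw, ← hp]
    exact p.getVert_length
  set Ws : ℕ → Set V := fun i => Side 𝒢 (w (i + 1)) (w i) with hWs
  set Cf : ℕ → Set (Sym2 V) := fun i => cls 𝒢 s(w (i + 1), w i) with hCf
  have hadj : ∀ i, i < D → 𝒢.Adj (w i) (w (i + 1)) := by
    intro i hi
    exact p.adj_getVert_succ (by omega)
  have hxd : ∀ i, i ≤ D → 𝒢.dist x (w i) = i ∧ 𝒢.dist (w i) (g • x) = D - i := by
    intro i hi
    have := getVert_dists hG p hp (i := i) (by omega)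
    rwa [hp] at this
  have hsub : ∀ i j, i ≤ j → j ≤ D → 𝒢.dist (w i) (w j) = j - i := by
    intro i j hij hj
    have := getVert_dist_sub hG p hp hij (by omega)
    exact this
  have hxnot : ∀ i, i < D → x ∉ Ws i := by
    intro i hi
    have h1 := hxd i (by omega)
    have h2 := hxd (i + 1) (by omega)
    rw [hWs]
    intro hmem
    rw [mem_side] at hmem
    have c1 : 𝒢.dist x (w i) = 𝒢.dist (w i) x := SimpleGraph.dist_comm
    have c2 : 𝒢.dist x (w (i + 1)) = 𝒢.dist (w (i + 1)) x := SimpleGraph.dist_comm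
    omega
  have hxopp : ∀ i, i < D → x ∈ Side 𝒢 (w i) (w (i + 1)) := by
    intro i hi
    exact (side_or hG (hadj i hi) x).resolve_right (hxnot i hi)
  have hgx : ∀ i, i < D → g • x ∈ Ws i := by
    intro i hi
    have h1 := hxd i (by omega)
    have h2 := hxd (i + 1) (by omega)
    rw [hWs, mem_side]
    have c1 : 𝒢.dist (g • x) (w i) = 𝒢.dist (w i) (g • x) := SimpleGraph.dist_comm
    have c2 : 𝒢.dist (g • x) (w (i + 1)) = 𝒢.dist (w (i + 1)) (g • x) := SimpleGraph.dist_comm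
    omega
  have hwself : ∀ i, i < D → w i ∈ Side 𝒢 (w i) (w (i + 1)) := by
    intro i hi
    exact mem_side_self hG (hadj i hi)
  have hwself' : ∀ i, i < D → w (i + 1) ∈ Ws i := by
    intro i hi
    exact mem_side_self hG (hadj i hi).symm
  have hwin : ∀ i j, i < j → j ≤ D → w j ∈ Ws i := by
    intro i j hij hj
    have hb : 𝒢.dist (w (i + 1)) (w j) + 𝒢.dist (w j) (w D) = 𝒢.dist (w (i + 1)) (w D) := by
      have e1 := hsub (i + 1) j (by omega) hj
      have e2 := hsub j D hj (le_refl D)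
      have e3 := hsub (i + 1) D (by omega) (le_refl D)
      omega
    rw [hwD] at hb
    have hiD : i < D := by omega
    exact side_convex hG (hadj i hiD).symm (hwself' i hiD) (hgx i hiD) hb
  have hWneq : ∀ i j, i < j → j < D → Ws j ≠ Ws i := by
    intro i j hij hj heq
    have h1 : w j ∈ Ws i := hwin i j hij (by omega)
    have h2 : w j ∈ Side 𝒢 (w j) (w (j + 1)) := hwself j hj
    rw [← heq] at h1
    exact side_not_mem hG h1 h2
  have hCinj : ∀ i j, i < D → j < D → Cf i = Cf j → i = j := by
    have key : ∀ i j, i < j → j < D → Cf i = Cf j → False := by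
      intro i j hij hj heq
      rw [hCf] at heq
      rcases side_pair_cases hG (hadj i (by omega)).symm (hadj j hj).symm heq with
        ⟨h1, h2⟩ | ⟨h1, h2⟩
      · exact hWneq i j hij hj h1
      · have hg1 : g • x ∈ Side 𝒢 (w j) (w (j + 1)) := by
          rw [h2]
          exact hgx i (by omega)
        exact side_not_mem hG (hgx j hj) hg1
    intro i j hi hj heq
    rcases Nat.lt_trichotomy i j with h | h | h
    · exact absurd heq (fun he => key i j h hj he)
    · exact h
    · exact absurd heq.symm (fun he => key j i h hi he)
  have hdich : ∀ i j, i < j → j < D → Ws j ⊆ Ws i ∨ Transverse 𝒢 (Cf i) (Cf j) := by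
    intro i j hij hj
    by_cases hcase : Ws j ⊆ Ws i
    · exact Or.inl hcase
    · right
      obtain ⟨z, hz1, hz2⟩ := Set.not_subset.mp hcase
      have hzB : z ∈ Side 𝒢 (w i) (w (i + 1)) :=
        (side_or hG (hadj i (by omega)) z).resolve_right hz2
      rw [hCf]
      refine transverse_of_crossing hG (hadj i (by omega)).symm (hadj j hj).symm
        (fun he => (by omega : i ≠ j) (hCinj i j (by omega) hj (by rw [hCf]; exact he)))
        ⟨g • x, hgx i (by omega), hgx j hj⟩
        ⟨w j, hwin i j hij (by omega), hwself j hj⟩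
        ⟨z, hzB, hz1⟩
        ⟨x, hxopp i (by omega), hxopp j hj⟩
  -- level bound
  have hlevel : ∀ t, ((Finset.range D).filter (fun i => ht Ws i = t)).card ≤ d := by
    intro t
    set T := (Finset.range D).filter (fun i => ht Ws i = t) with hT
    have hTD : ∀ i ∈ T, i < D := by
      intro i hi
      exact Finset.mem_range.mp (Finset.mem_filter.mp hi).1
    have htrans : ∀ i ∈ T, ∀ j ∈ T, i < j → Transverse 𝒢 (Cf i) (Cf j) := by
      intro i hi j hj hij
      rcases hdich i j hij (hTD j hj) with hsub' | htr
      · exfalso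
        have hssub : Ws j < Ws i := lt_of_le_of_ne hsub' (hWneq i j hij (hTD j hj))
        have := ht_lt Ws hij hssub
        have e1 := (Finset.mem_filter.mp hi).2
        have e2 := (Finset.mem_filter.mp hj).2
        omega
      · exact htr
    have hTset : ∀ H ∈ (Cf '' (T : Set ℕ)), IsHyperplane 𝒢 H := by
      rintro H ⟨i, hi, rfl⟩
      have hiD : i < D := hTD i hi
      exact ⟨s(w (i + 1), w i), 𝒢.mem_edgeSet.mpr (hadj i hiD).symm, rfl⟩
    have hTpair : (Cf '' (T : Set ℕ)).Pairwise (Transverse 𝒢) := by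
      rintro A ⟨i, hi, rfl⟩ B ⟨j, hj, rfl⟩ hAB
      have hij : i ≠ j := fun he => hAB (by rw [he])
      rcases Nat.lt_or_ge i j with h | h
      · exact htrans i hi j hj h
      · exact MedAux.transverse_symm (htrans j hj i hi (by omega))
    have hcard := (hdim (Cf '' (T : Set ℕ)) hTset hTpair).2
    have hinj : Set.InjOn Cf (T : Set ℕ) := by
      intro i hi j hj heq
      exact hCinj i j (hTD i hi) (hTD j hj) heq
    rw [Set.ncard_image_of_injOn hinj, Set.ncard_coe_finset] at hcard
    exact hcard
  -- extract a long chain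
  obtain ⟨i₀, hi₀D, hi₀ht⟩ := MedAux.exists_high Ws D d F₀ hlevel hbig
  obtain ⟨l, hlhead, hllen, hlchain, hlbd⟩ := MedAux.ht_chain Ws i₀
  have hlD : ∀ i ∈ l, i < D := fun i hi => by
    have := hlbd i hi
    omega
  haveI : IsTrans ℕ (fun (p q : ℕ) => q < p ∧ Ws p < Ws q) :=
    ⟨fun a b c h1 h2 => ⟨lt_trans h2.1 h1.1, lt_trans h1.2 h2.2⟩⟩
  have hlp : l.Pairwise (fun (p q : ℕ) => q < p ∧ Ws p < Ws q) :=
    List.isChain_iff_pairwise.mp hlchain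
  have hlnodup : l.Nodup := hlp.imp (fun h => ne_of_gt h.1)
  -- flips along the word
  have hflip : ∀ i : ℕ, ∃ j : ℕ, i < D →
      (j < lst.length ∧ pfx j • x ∉ Ws i ∧ pfx (j + 1) • x ∈ Ws i) := by
    intro i
    by_cases hi : i < D
    · have h0 : ¬ (pfx 0 • x ∈ Ws i) := by rw [hpfx0]; exact hxnot i hi
      have hL : pfx lst.length • x ∈ Ws i := by rw [hpfxL]; exact hgx i hi
      obtain ⟨j, hj1, hj2, hj3⟩ := MedAux.exists_flip (P := fun j => pfx j • x ∈ Ws i) h0 hL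
      exact ⟨j, fun _ => ⟨hj1, hj2, hj3⟩⟩
    · exact ⟨0, fun h => absurd h hi⟩
  choose J hJ using hflip
  set Φ : ℕ → Set (Sym2 V) := fun i =>
    cls 𝒢 s((pfx (J i))⁻¹ • w (i + 1), (pfx (J i))⁻¹ • w i) with hΦ
  -- the finite target set
  set 𝒰 : Set (Set (Sym2 V)) := ⋃ s ∈ S2, SepCls 𝒢 x (s • x) with h𝒰
  have hUboth : ∀ T : Finset Γ, (⋃ s ∈ T, SepCls 𝒢 x (s • x)).Finite ∧
      (⋃ s ∈ T, SepCls 𝒢 x (s • x)).ncard ≤ ∑ s ∈ T, 𝒢.dist x (s • x) := by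
    intro T
    induction T using Finset.induction_on with
    | empty => simp
    | insert a T' hnotmem ih =>
      rw [Finset.set_biUnion_insert, Finset.sum_insert hnotmem]
      constructor
      · exact Set.Finite.union (sepCls_finite hG) ih.1
      · calc ((SepCls 𝒢 x (a • x)) ∪ ⋃ s ∈ T', SepCls 𝒢 x (s • x)).ncard
            ≤ (SepCls 𝒢 x (a • x)).ncard + (⋃ s ∈ T', SepCls 𝒢 x (s • x)).ncard :=
              Set.ncard_union_le _ _
          _ ≤ 𝒢.dist x (a • x) + ∑ s ∈ T', 𝒢.dist x (s • x) :=
              Nat.add_le_add (sepCls_card_le hG) ih.2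
  have hUfin : 𝒰.Finite := (hUboth S2).1
  have hUcard : 𝒰.ncard ≤ F₀ := (hUboth S2).2
  -- each chain element maps into 𝒰
  have hsidex : ∀ i, i < D → x ∈ Side 𝒢 ((pfx (J i))⁻¹ • w i) ((pfx (J i))⁻¹ • w (i + 1)) := by
    intro i hi
    rw [mem_side_smul hG hact, inv_inv]
    have hnot : pfx (J i) • x ∉ Side 𝒢 (w (i + 1)) (w i) := by
      have h := (hJ i hi).2.1
      simpa [hWs] using h
    exact (side_or hG (hadj i hi) (pfx (J i) • x)).resolve_right hnot
  have hsides : ∀ i (hi : i < D),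
      (lst.get ⟨J i, (hJ i hi).1⟩) • x ∈
        Side 𝒢 ((pfx (J i))⁻¹ • w (i + 1)) ((pfx (J i))⁻¹ • w i) := by
    intro i hi
    rw [mem_side_smul hG hact, inv_inv]
    have h2 : pfx (J i + 1) • x ∈ Ws i := (hJ i hi).2.2
    rw [hpfxstep (J i) (hJ i hi).1, mul_smul] at h2
    simpa [hWs] using h2
  have hΦmem : ∀ i, i < D → Φ i ∈ 𝒰 := by
    intro i hi
    have hjL := (hJ i hi).1
    set s0 : Γ := lst.get ⟨J i, hjL⟩ with hs0
    have hs0mem : s0 ∈ S2 := hmemS2 s0 (List.get_mem lst ⟨J i, hjL⟩)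
    rw [h𝒰]
    refine Set.mem_biUnion hs0mem ?_
    refine ⟨(pfx (J i))⁻¹ • w i, (pfx (J i))⁻¹ • w (i + 1), ?_, ?_, hsidex i hi, hsides i hi⟩
    · exact (hact (pfx (J i))⁻¹ (w i) (w (i + 1))).mp (hadj i hi)
    · simp only [hΦ]
      exact cls_swap _ _
  -- pigeonhole
  have hcardl : F₀ < l.toFinset.card := by
    rw [List.toFinset_card_of_nodup hlnodup]
    omega
  have hmapsto : ∀ i ∈ l.toFinset, Φ i ∈ hUfin.toFinset := by
    intro i hi
    rw [Set.Finite.mem_toFinset]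
    exact hΦmem i (hlD i (List.mem_toFinset.mp hi))
  have hUcard' : hUfin.toFinset.card ≤ F₀ := by
    rw [← Set.ncard_eq_toFinset_card _ hUfin]
    exact hUcard
  obtain ⟨i₁, hi₁, i₂, hi₂, hne12, hΦeq⟩ :=
    Finset.exists_ne_map_eq_of_card_lt_of_maps_to (by omega) hmapsto
  have hi₁l : i₁ ∈ l := List.mem_toFinset.mp hi₁
  have hi₂l : i₂ ∈ l := List.mem_toFinset.mp hi₂
  -- order the two indices
  obtain ⟨α, β, hβα, hWαβ, hΦαβ⟩ :
      ∃ α β : ℕ, β < α ∧ Ws α < Ws β ∧ Φ α = Φ β ∧ α < D ∧ β < D := by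
    rcases MedAux.pairwise_two hlp hi₁l hi₂l hne12 with h | h
    · exact ⟨i₁, i₂, h.1, h.2, hΦeq, hlD _ hi₁l, hlD _ hi₂l⟩
    · exact ⟨i₂, i₁, h.1, h.2, hΦeq.symm, hlD _ hi₂l, hlD _ hi₁l⟩
  obtain ⟨hΦeq', hαD, hβD⟩ := hΦαβ
  -- identify the translated halfspaces
  set Pα : Γ := pfx (J α) with hPα
  set Pβ : Γ := pfx (J β) with hPβ
  have hadjα : 𝒢.Adj (Pα⁻¹ • w (α + 1)) (Pα⁻¹ • w α) :=
    (hact Pα⁻¹ _ _).mp (hadj α hαD).symm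
  have hadjβ : 𝒢.Adj (Pβ⁻¹ • w (β + 1)) (Pβ⁻¹ • w β) :=
    (hact Pβ⁻¹ _ _).mp (hadj β hβD).symm
  have hUeq : Side 𝒢 (Pβ⁻¹ • w (β + 1)) (Pβ⁻¹ • w β) =
      Side 𝒢 (Pα⁻¹ • w (α + 1)) (Pα⁻¹ • w α) := by
    have heq : cls 𝒢 s(Pα⁻¹ • w (α + 1), Pα⁻¹ • w α) =
        cls 𝒢 s(Pβ⁻¹ • w (β + 1), Pβ⁻¹ • w β) := hΦeq'
    rcases side_pair_cases hG hadjα hadjβ heq with ⟨h1, h2⟩ | ⟨h1, h2⟩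
    · exact h1
    · exfalso
      have hx1 : x ∈ Side 𝒢 (Pα⁻¹ • w α) (Pα⁻¹ • w (α + 1)) := hsidex α hαD
      have hx2 : x ∈ Side 𝒢 (Pβ⁻¹ • w β) (Pβ⁻¹ • w (β + 1)) := hsidex β hβD
      rw [h2] at hx2
      exact side_not_mem hG hx1 hx2
  -- the skewering element
  set γ : Γ := Pβ⁻¹ * Pα with hγ
  have hγa : γ • (Pα⁻¹ • w (α + 1)) = Pβ⁻¹ • w (α + 1) := by
    rw [hγ, mul_smul, smul_inv_smul]
  have hγb : γ • (Pα⁻¹ • w α) = Pβ⁻¹ • w α := by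
    rw [hγ, mul_smul, smul_inv_smul]
  have hmemγ : ∀ z : V, z ∈ Side 𝒢 (Pβ⁻¹ • w (α + 1)) (Pβ⁻¹ • w α) ↔ Pβ • z ∈ Ws α := by
    intro z
    rw [mem_side_smul hG hact, inv_inv]
  have hmemU : ∀ z : V, z ∈ Side 𝒢 (Pβ⁻¹ • w (β + 1)) (Pβ⁻¹ • w β) ↔ Pβ • z ∈ Ws β := by
    intro z
    rw [mem_side_smul hG hact, inv_inv]
  have hsubγ : Side 𝒢 (γ • (Pα⁻¹ • w (α + 1))) (γ • (Pα⁻¹ • w α)) ⊆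
      Side 𝒢 (Pα⁻¹ • w (α + 1)) (Pα⁻¹ • w α) := by
    rw [hγa, hγb, ← hUeq]
    intro z hz
    rw [hmemγ] at hz
    rw [hmemU]
    exact le_of_lt hWαβ hz
  have hneγ : Side 𝒢 (γ • (Pα⁻¹ • w (α + 1))) (γ • (Pα⁻¹ • w α)) ≠
      Side 𝒢 (Pα⁻¹ • w (α + 1)) (Pα⁻¹ • w α) := by
    rw [hγa, hγb, ← hUeq]
    intro heq
    have : Ws α = Ws β := by
      ext y
      have h1 := hmemγ (Pβ⁻¹ • y)
      have h2 := hmemU (Pβ⁻¹ • y)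
      rw [smul_inv_smul] at h1 h2
      rw [← h1, heq, h2]
    exact (ne_of_lt hWαβ) this
  obtain ⟨v, hv⟩ := hell γ
  exact no_skewer hG hact γ _ _ hadjα v hv hsubγ hneγ
end

section
/- Let G be a finitely generated group acting by automorphisms on a median graph 𝒢 and let x₀ be a vertex. Let C be the convex hull of the orbit G·x₀, i.e., the intersection of all convex sets of vertices containing G·x₀. Then C is G-invariant, and G acts with finitely many orbits on the hyperplanes crossing C: there is a finite set F of hyperplanes of 𝒢 such that every hyperplane of 𝒢 containing an edge with both endpoints in C equals g·H for some g ∈ G and H ∈ F. -/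
/-- A set `S` of vertices is convex: every vertex on a geodesic (a walk realizing
the graph distance) between two vertices of `S` belongs to `S`. -/
def ConvexSet {V : Type*} (G : SimpleGraph V) (S : Set V) : Prop :=
  ∀ u ∈ S, ∀ v ∈ S, ∀ w : G.Walk u v, w.length = G.dist u v → ∀ x ∈ w.support, x ∈ S

/-- The image `g · H` of a set of edges `H` under the action of a group element `g`. -/
def hypImage {V Γ : Type*} [SMul Γ V] (g : Γ) (H : Set (Sym2 V)) : Set (Sym2 V) :=
  Sym2.map (fun v => g • v) '' H

namespace MGproof

open SimpleGraph Relation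

variable {V : Type*} {𝒢 : SimpleGraph V}

lemma dc (𝒢 : SimpleGraph V) (u v : V) : 𝒢.dist u v = 𝒢.dist v u := SimpleGraph.dist_comm

lemma tri (hc : 𝒢.Connected) (u v w : V) : 𝒢.dist u w ≤ 𝒢.dist u v + 𝒢.dist v w :=
  hc.dist_triangle

lemma adj1 {u v : V} (h : 𝒢.Adj u v) : 𝒢.dist u v = 1 := SimpleGraph.dist_eq_one_iff_adj.mpr h

lemma d0 (hc : 𝒢.Connected) {x y : V} (h : 𝒢.dist x y = 0) : x = y :=
  (hc.dist_eq_zero_iff).mp h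

lemma adj_of_d1 (hc : 𝒢.Connected) {x y : V} (h : 𝒢.dist x y = 1) : 𝒢.Adj x y :=
  SimpleGraph.dist_eq_one_iff_adj.mp h

lemma med_ex (hG : MedianGraph 𝒢) (x y z : V) : ∃ m, IsMedianOf 𝒢 m x y z :=
  (hG.2 x y z).exists

lemma med_uniq (hG : MedianGraph 𝒢) {x y z m m' : V} (h : IsMedianOf 𝒢 m x y z)
    (h' : IsMedianOf 𝒢 m' x y z) : m = m' :=
  ((hG.2 x y z).unique h h')

/-- Lemma B : no vertex is equidistant from the ends of an edge. -/
lemma adj_dist_ne (hG : MedianGraph 𝒢) {x y : V} (h : 𝒢.Adj x y) (z : V) :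
    𝒢.dist z x ≠ 𝒢.dist z y := by
  have hc := hG.1
  obtain ⟨m, h1, h2, h3⟩ := med_ex hG x y z
  have hxy : 𝒢.dist x y = 1 := adj1 h
  intro hzz
  have h01 : 𝒢.dist x m = 0 ∨ 𝒢.dist m y = 0 := by omega
  rcases h01 with h0 | h0
  · have hxm : x = m := d0 hc h0
    rw [← hxm] at h2
    have e1 := dc 𝒢 y x
    have e2 := dc 𝒢 z x
    have e3 := dc 𝒢 z y
    omega
  · have hmy : m = y := d0 hc h0
    rw [hmy] at h3
    have e1 := dc 𝒢 z x
    have e2 := dc 𝒢 z y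
    have e3 := dc 𝒢 y z
    omega

/-- dichotomy of sides -/
lemma side_dichotomy (hG : MedianGraph 𝒢) {x y : V} (h : 𝒢.Adj x y) (z : V) :
    𝒢.dist z x + 1 = 𝒢.dist z y ∨ 𝒢.dist z y + 1 = 𝒢.dist z x := by
  have hc := hG.1
  have t1 := tri hc z x y
  have t2 := tri hc z y x
  have hxy : 𝒢.dist x y = 1 := adj1 h
  have hyx : 𝒢.dist y x = 1 := by rw [dc]; exact hxy
  have hne := adj_dist_ne hG h z
  omega

/-- step towards a vertex along a geodesic -/
lemma exists_adj_dist (hc : 𝒢.Connected) {x a : V} {k : ℕ} (h : 𝒢.dist x a = k + 1) :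
    ∃ x' : V, 𝒢.Adj x x' ∧ 𝒢.dist x' a = k := by
  obtain ⟨p, hp⟩ := hc.exists_walk_length_eq_dist x a
  rw [h] at hp
  cases p with
  | nil => simp at hp
  | cons hadj q =>
    rename_i v
    refine ⟨v, hadj, ?_⟩
    have h1 : 𝒢.dist v a ≤ q.length := SimpleGraph.dist_le q
    have h2 : q.length = k := by simpa using hp
    have t1 := tri hc x v a
    have := adj1 hadj
    omega

/-- pattern of distances across a crossing edge -/
lemma crossing_pattern (hG : MedianGraph 𝒢) {u v p q : V} (huv : 𝒢.Adj u v)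
    (hpq : 𝒢.Adj p q) (hp : 𝒢.dist p u + 1 = 𝒢.dist p v) (hq : 𝒢.dist q v + 1 = 𝒢.dist q u) :
    𝒢.dist q v = 𝒢.dist p u ∧ 𝒢.dist q u = 𝒢.dist p u + 1 := by
  have hc := hG.1
  have t1 := tri hc q p u
  have t2 := tri hc p q v
  have h1 : 𝒢.dist q p = 1 := by rw [dc]; exact adj1 hpq
  have h2 : 𝒢.dist p q = 1 := adj1 hpq
  omega

/-- splitting a geodesic walk at a support vertex -/
lemma geodesic_split [DecidableEq V] (hc : 𝒢.Connected) {u w : V} (p : 𝒢.Walk u w)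
    (hp : p.length = 𝒢.dist u w) {x : V} (hx : x ∈ p.support) :
    𝒢.dist u x + 𝒢.dist x w = 𝒢.dist u w ∧
      (p.takeUntil x hx).length = 𝒢.dist u x ∧ (p.dropUntil x hx).length = 𝒢.dist x w := by
  have hsplit : ((p.takeUntil x hx).append (p.dropUntil x hx)).length = p.length := by
    rw [p.take_spec hx]
  rw [SimpleGraph.Walk.length_append] at hsplit
  have h1 : 𝒢.dist u x ≤ (p.takeUntil x hx).length := SimpleGraph.dist_le _
  have h2 : 𝒢.dist x w ≤ (p.dropUntil x hx).length := SimpleGraph.dist_le _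
  have t1 := tri hc u x w
  omega

/-- finding a side-flip edge along a geodesic -/
lemma exists_flip (hc : 𝒢.Connected) (σ : V → Prop) :
    ∀ {s t : V} (p : 𝒢.Walk s t), p.length = 𝒢.dist s t → ¬ σ s → σ t →
    ∃ x y : V, 𝒢.Adj x y ∧ s(x,y) ∈ p.edges ∧ ¬ σ x ∧ σ y ∧
      𝒢.dist s x + (1 + 𝒢.dist y t) = 𝒢.dist s t := by
  intro s t p
  induction p with
  | nil => intro _ hs ht; exact absurd ht hs
  | cons hadj q IH =>
    rename_i a v t'
    intro hlen hs ht
    have hq1 : 𝒢.dist v t' ≤ q.length := SimpleGraph.dist_le q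
    have t1 := tri hc a v t'
    have hav : 𝒢.dist a v = 1 := adj1 hadj
    have hlen' : q.length + 1 = 𝒢.dist a t' := by simpa [Nat.add_comm] using hlen
    have hqgeo : q.length = 𝒢.dist v t' := by omega
    have hdat : 𝒢.dist a t' = 1 + 𝒢.dist v t' := by omega
    by_cases hv : σ v
    · refine ⟨a, v, hadj, ?_, hs, hv, ?_⟩
      · simp [SimpleGraph.Walk.edges_cons]
      · have : 𝒢.dist a a = 0 := by simp
        omega
    · obtain ⟨x, y, hxy, hmem, hx, hy, heq⟩ := IH hqgeo hv ht
      refine ⟨x, y, hxy, ?_, hx, hy, ?_⟩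
      · simp [SimpleGraph.Walk.edges_cons, hmem]
      · have t2 := tri hc a x t'
        have t3 := tri hc a v x
        have t4 := tri hc x y t'
        have hxy1 : 𝒢.dist x y = 1 := adj1 hxy
        omega

/-- Lemma A : every crossing edge of a wall is in the wall's hyperplane class. -/
lemma eqvgen_of_crossing (hG : MedianGraph 𝒢) {a b : V} (hab : 𝒢.Adj a b) :
    ∀ k : ℕ, ∀ x y : V, 𝒢.Adj x y → 𝒢.dist x a = k → 𝒢.dist x b = k + 1 →
      𝒢.dist y b = k → 𝒢.dist y a = k + 1 →
      Relation.EqvGen (SquareOpposite 𝒢) s(a, b) s(x, y) := by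
  have hc := hG.1
  intro k
  induction k using Nat.strong_induction_on with
  | _ k IH =>
    intro x y hxy hxa hxb hyb hya
    obtain _ | κ := k
    · have hx : x = a := d0 hc hxa
      have hy : y = b := d0 hc hyb
      subst hx; subst hy
      exact Relation.EqvGen.refl _
    · obtain ⟨x', hxx', hx'a⟩ := exists_adj_dist hc hxa
      have hdich := side_dichotomy hG hab x'
      have t1 := tri hc x x' b
      have hxx'1 : 𝒢.dist x x' = 1 := adj1 hxx'
      have hx'b : 𝒢.dist x' b = κ + 1 := by omega
      have t2 := tri hc y x' a
      have t3 := tri hc x' x y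
      have hx'x : 𝒢.dist x' x = 1 := by rw [dc]; exact hxx'1
      have hxy1 : 𝒢.dist x y = 1 := adj1 hxy
      have hyx' := dc 𝒢 y x'
      have hx'y2 : 𝒢.dist x' y = 2 := by omega
      obtain ⟨t, m1, m2, m3⟩ := med_ex hG x' y b
      have hcases : (𝒢.dist x' t = 0) ∨ (𝒢.dist t y = 0) ∨
          (𝒢.dist x' t = 1 ∧ 𝒢.dist t y = 1) := by omega
      rcases hcases with h0 | h0 | ⟨hx't, hty⟩
      · exfalso
        have he : x' = t := d0 hc h0
        rw [← he] at m2
        omega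
      · exfalso
        have he : t = y := d0 hc h0
        rw [he] at m3
        omega
      · have hx'tadj : 𝒢.Adj x' t := adj_of_d1 hc hx't
        have htyadj : 𝒢.Adj t y := adj_of_d1 hc hty
        have htb : 𝒢.dist t b = κ := by omega
        have hdich2 := side_dichotomy hG hab t
        have t4 := tri hc y t a
        have hyt : 𝒢.dist y t = 1 := by rw [dc]; exact hty
        have hta : 𝒢.dist t a = κ + 1 := by omega
        have hso : SquareOpposite 𝒢 s(x', t) s(x, y) := by
          refine ⟨x', t, x, y, hx'tadj.ne, ?_, ?_, ?_, htyadj.ne, hxy.ne,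
            hx'tadj, hxy, hxx'.symm, htyadj, rfl, rfl⟩
          · intro h; rw [h] at hx'a; omega
          · intro h; rw [h] at hx'a; omega
          · intro h; rw [h] at htb; omega
        exact Relation.EqvGen.trans _ _ _
          (IH κ (by omega) x' t hx'tadj hx'a hx'b htb hta)
          (Relation.EqvGen.rel _ _ hso)

/-- core square lemma : a square cannot have exactly one corner on the `b`-side. -/
lemma CL (hG : MedianGraph 𝒢) {a b α β γ δ : V} (hab : 𝒢.Adj a b)
    (hαβ : 𝒢.Adj α β) (hγδ : 𝒢.Adj γ δ) (hαγ : 𝒢.Adj α γ) (hβδ : 𝒢.Adj β δ)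
    (hβγ : β ≠ γ) (hαδ : α ≠ δ)
    (hα : 𝒢.dist α a + 1 = 𝒢.dist α b) (hβ : 𝒢.dist β b + 1 = 𝒢.dist β a)
    (hγ : 𝒢.dist γ a + 1 = 𝒢.dist γ b) (hδ : 𝒢.dist δ a + 1 = 𝒢.dist δ b) : False := by
  have hc := hG.1
  obtain ⟨hβb, hβa⟩ := crossing_pattern hG hab hαβ hα hβ
  have hαβ1 : 𝒢.dist α β = 1 := adj1 hαβ
  set κ := 𝒢.dist α a with hκ
  -- distances for δ
  have t1 := tri hc δ β b
  have t2 := tri hc β δ a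
  have hδβ : 𝒢.dist δ β = 1 := by rw [dc]; exact adj1 hβδ
  have hβδ1 : 𝒢.dist β δ = 1 := adj1 hβδ
  have hδa : 𝒢.dist δ a = κ := by omega
  have hδb : 𝒢.dist δ b = κ + 1 := by omega
  -- distances for γ
  have hγα : 𝒢.dist γ α = 1 := by rw [dc]; exact adj1 hαγ
  have hαγ1 : 𝒢.dist α γ = 1 := adj1 hαγ
  have hγa2 := adj_dist_ne hG hαγ a   -- d a α ≠ d a γ
  have e1 := dc 𝒢 a α
  have e2 := dc 𝒢 a γ
  have t3 := tri hc γ α a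
  have t4 := tri hc α γ a
  have hγcase : 𝒢.dist γ a + 1 = κ ∨ 𝒢.dist γ a = κ + 1 := by omega
  -- d α δ = 2
  have t5 := tri hc α β δ
  have hαδ2 : 𝒢.dist α δ = 2 := by
    have hle : 𝒢.dist α δ ≤ 2 := by omega
    have hne0 : 𝒢.dist α δ ≠ 0 := fun h => hαδ (d0 hc h)
    have hne1 : 𝒢.dist α δ ≠ 1 := by
      intro h1
      have := adj_dist_ne hG hβδ α
      have e3 := dc 𝒢 α β
      have e4 := dc 𝒢 α δ
      omega
    omega
  -- β is a median of (α, δ, b)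
  have hβmed : IsMedianOf 𝒢 β α δ b := by
    refine ⟨by omega, by omega, by omega⟩
  rcases hγcase with hγa | hγa
  · -- γ is also a median of (α, δ, b)
    have hγb : 𝒢.dist γ b = κ := by omega
    have hδγ : 𝒢.dist δ γ = 1 := by rw [dc]; exact adj1 hγδ
    have hγδ1 : 𝒢.dist γ δ = 1 := adj1 hγδ
    have hγmed : IsMedianOf 𝒢 γ α δ b := by
      refine ⟨by omega, by omega, by omega⟩
    exact hβγ (med_uniq hG hβmed hγmed)
  · have hγb : 𝒢.dist γ b = κ + 2 := by omega
    obtain ⟨m, m1, m2, m3⟩ := med_ex hG α δ a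
    -- m1 : d α δ = d α m + d m δ ; m2 : d δ a = d δ m + d m a ; m3 : d α a = d α m + d m a
    have hcases : (𝒢.dist α m = 0) ∨ (𝒢.dist m δ = 0) ∨
        (𝒢.dist α m = 1 ∧ 𝒢.dist m δ = 1) := by omega
    rcases hcases with h0 | h0 | ⟨ham, hmd⟩
    · exfalso
      have he : α = m := d0 hc h0
      rw [← he] at m2
      have e5 := dc 𝒢 δ α
      omega
    · exfalso
      have he : m = δ := d0 hc h0
      rw [he] at m3
      have e5 := dc 𝒢 α δ
      omega
    · have hαm : 𝒢.Adj α m := adj_of_d1 hc ham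
      have hma : 𝒢.dist m a + 1 = κ := by omega
      have hdich := side_dichotomy hG hab m
      have t6 := tri hc α m b
      have hmb : 𝒢.dist m b = κ := by omega
      have hmδadj : 𝒢.Adj m δ := adj_of_d1 hc hmd
      have hδm : 𝒢.dist δ m = 1 := by rw [dc]; exact hmd
      have hmmed : IsMedianOf 𝒢 m α δ b := by
        refine ⟨by omega, by omega, by omega⟩
      have : m = β := med_uniq hG hmmed hβmed
      rw [this] at hma
      omega
/-- An edge crossing the wall of `(a,b)`. -/
def Crossing (𝒢 : SimpleGraph V) (a b : V) (f : Sym2 V) : Prop :=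
  ∃ x y : V, f = s(x, y) ∧ 𝒢.Adj x y ∧
    𝒢.dist x a + 1 = 𝒢.dist x b ∧ 𝒢.dist y b + 1 = 𝒢.dist y a

lemma so_symm {e f : Sym2 V} (h : SquareOpposite 𝒢 e f) : SquareOpposite 𝒢 f e := by
  obtain ⟨a, b, c, d, h1, h2, h3, h4, h5, h6, hab, hcd, hac, hbd, he, hf⟩ := h
  exact ⟨c, d, a, b, h6, h2.symm, h4.symm, h3.symm, h5.symm, h1, hcd, hab,
    hac.symm, hbd.symm, hf, he⟩

lemma crossing_of_SO (hG : MedianGraph 𝒢) {a b : V} (hab : 𝒢.Adj a b) {e f : Sym2 V}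
    (hso : SquareOpposite 𝒢 e f) (hce : Crossing 𝒢 a b e) : Crossing 𝒢 a b f := by
  obtain ⟨α, β, γ, δ, n1, n2, n3, n4, n5, n6, hαβ, hγδ, hαγ, hβδ, he, hf⟩ := hso
  obtain ⟨x, y, hexy, hxyadj, hx, hy⟩ := hce
  have hxy2 : s(x, y) = s(α, β) := by rw [← hexy, he]
  rcases Sym2.eq_iff.mp hxy2 with ⟨hxα, hyβ⟩ | ⟨hxβ, hyα⟩
  · subst hxα; subst hyβ
    rcases side_dichotomy hG hab γ with hγ | hγ <;>
      rcases side_dichotomy hG hab δ with hδ | hδ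
    · exact absurd (CL hG hab hαβ hγδ hαγ hβδ n4 n3 hx hy hγ hδ) not_false
    · exact ⟨γ, δ, hf, hγδ, hγ, hδ⟩
    · exact ⟨δ, γ, by rw [hf, Sym2.eq_swap], hγδ.symm, hδ, hγ⟩
    · exact absurd (CL hG hab.symm hαβ.symm hγδ.symm hβδ hαγ n3 n4 hy hx hδ hγ) not_false
  · subst hxβ; subst hyα
    rcases side_dichotomy hG hab γ with hγ | hγ <;>
      rcases side_dichotomy hG hab δ with hδ | hδ
    · exact absurd (CL hG hab hαβ.symm hγδ.symm hβδ hαγ n3 n4 hx hy hδ hγ) not_false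
    · exact ⟨γ, δ, hf, hγδ, hγ, hδ⟩
    · exact ⟨δ, γ, by rw [hf, Sym2.eq_swap], hγδ.symm, hδ, hγ⟩
    · exact absurd (CL hG hab.symm hαβ hγδ hαγ hβδ n4 n3 hy hx hγ hδ) not_false

lemma crossing_invariant (hG : MedianGraph 𝒢) {a b : V} (hab : 𝒢.Adj a b) {e f : Sym2 V}
    (h : Relation.EqvGen (SquareOpposite 𝒢) e f) :
    Crossing 𝒢 a b e ↔ Crossing 𝒢 a b f := by
  induction h with
  | rel x y hxy => exact ⟨crossing_of_SO hG hab hxy, crossing_of_SO hG hab (so_symm hxy)⟩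
  | refl x => exact Iff.rfl
  | symm x y _ ih => exact ih.symm
  | trans x y z _ _ ih1 ih2 => exact ih1.trans ih2

lemma crossing_of_eqvgen (hG : MedianGraph 𝒢) {a b : V} (hab : 𝒢.Adj a b) {f : Sym2 V}
    (h : Relation.EqvGen (SquareOpposite 𝒢) s(a, b) f) : Crossing 𝒢 a b f := by
  refine (crossing_invariant hG hab h).mp ⟨a, b, rfl, hab, ?_, ?_⟩
  · have h1 : 𝒢.dist a a = 0 := SimpleGraph.dist_self
    have h2 := adj1 hab
    omega
  · have h1 : 𝒢.dist b b = 0 := SimpleGraph.dist_self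
    have h2 := adj1 hab
    have h3 := dc 𝒢 b a
    omega

lemma edge_mem_of_eqvgen {e f : Sym2 V} (h : Relation.EqvGen (SquareOpposite 𝒢) e f) :
    e ∈ 𝒢.edgeSet ↔ f ∈ 𝒢.edgeSet := by
  induction h with
  | rel x y hxy =>
    obtain ⟨a, b, c, d, _, _, _, _, _, _, hab, hcd, _, _, he, hf⟩ := hxy
    subst he; subst hf
    simp [SimpleGraph.mem_edgeSet, hab, hcd]
  | refl x => exact Iff.rfl
  | symm x y _ ih => exact ih.symm
  | trans x y z _ _ ih1 ih2 => exact ih1.trans ih2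

/-- The hyperplane class of an edge. -/
def cls (𝒢 : SimpleGraph V) (e : Sym2 V) : Set (Sym2 V) :=
  {f | Relation.EqvGen (SquareOpposite 𝒢) e f}

lemma mem_cls_self (𝒢 : SimpleGraph V) (e : Sym2 V) : e ∈ cls 𝒢 e :=
  Relation.EqvGen.refl e

lemma cls_eq_of_eqvgen {e f : Sym2 V} (h : Relation.EqvGen (SquareOpposite 𝒢) e f) :
    cls 𝒢 e = cls 𝒢 f := by
  ext g
  constructor
  · intro hg; exact Relation.EqvGen.trans _ _ _ (Relation.EqvGen.symm _ _ h) hg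
  · intro hg; exact Relation.EqvGen.trans _ _ _ h hg

/-- Halfspaces are convex in median graphs. -/
lemma halfspace_convex (hG : MedianGraph 𝒢) {a b : V} (hab : 𝒢.Adj a b) :
    ConvexSet 𝒢 {w : V | 𝒢.dist w a + 1 = 𝒢.dist w b} := by
  classical
  intro u hu w hw p hp x hxsup
  by_contra hxW
  simp only [Set.mem_setOf_eq] at hu hw hxW
  have hc := hG.1
  have hxside : 𝒢.dist x b + 1 = 𝒢.dist x a := by
    rcases side_dichotomy hG hab x with h | h
    · exact absurd h hxW
    · exact h
  obtain ⟨hsum, hlen1, hlen2⟩ := geodesic_split hc p hp hxsup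
  obtain ⟨p₁, q₁, hpq1, hmem1, hnp1, hq1, heq1⟩ :=
    exists_flip hc (fun z => 𝒢.dist z b + 1 = 𝒢.dist z a) (p.takeUntil x hxsup) hlen1
      (by show ¬(𝒢.dist u b + 1 = 𝒢.dist u a); omega) hxside
  obtain ⟨q₂, p₂, hpq2, hmem2, hnq2, hp2, heq2⟩ :=
    exists_flip hc (fun z => 𝒢.dist z a + 1 = 𝒢.dist z b) (p.dropUntil x hxsup) hlen2
      (by show ¬(𝒢.dist x a + 1 = 𝒢.dist x b); omega) hw
  have hnp1' : ¬(𝒢.dist p₁ b + 1 = 𝒢.dist p₁ a) := hnp1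
  have hq1' : 𝒢.dist q₁ b + 1 = 𝒢.dist q₁ a := hq1
  have hnq2' : ¬(𝒢.dist q₂ a + 1 = 𝒢.dist q₂ b) := hnq2
  have hp2' : 𝒢.dist p₂ a + 1 = 𝒢.dist p₂ b := hp2
  have hp1side : 𝒢.dist p₁ a + 1 = 𝒢.dist p₁ b := by
    rcases side_dichotomy hG hab p₁ with h | h
    · exact h
    · exact absurd h hnp1'
  have hq2side : 𝒢.dist q₂ b + 1 = 𝒢.dist q₂ a := by
    rcases side_dichotomy hG hab q₂ with h | h
    · exact absurd h hnq2'
    · exact h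
  obtain ⟨c1, c2⟩ := crossing_pattern hG hab hpq1 hp1side hq1'
  obtain ⟨c3, c4⟩ := crossing_pattern hG hab hpq2.symm hp2' hq2side
  have EA1 := eqvgen_of_crossing hG hab (𝒢.dist p₁ a) p₁ q₁ hpq1 rfl (by omega) (by omega)
    (by omega)
  have EA2 := eqvgen_of_crossing hG hab (𝒢.dist p₂ a) p₂ q₂ hpq2.symm rfl (by omega) (by omega)
    (by omega)
  have hEg : Relation.EqvGen (SquareOpposite 𝒢) s(p₁, q₁) s(p₂, q₂) :=
    Relation.EqvGen.trans _ _ _ (Relation.EqvGen.symm _ _ EA1) EA2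
  obtain ⟨X, Y, hXY, hadjXY, hX, hY⟩ := crossing_of_eqvgen hG hpq1 hEg
  -- metric computations
  have ta : 𝒢.dist u w ≤ 𝒢.dist u p₁ + 𝒢.dist p₁ w := tri hc u p₁ w
  have tb : 𝒢.dist p₁ w ≤ 𝒢.dist p₁ p₂ + 𝒢.dist p₂ w := tri hc p₁ p₂ w
  have tc : 𝒢.dist p₁ p₂ ≤ 𝒢.dist p₁ q₁ + 𝒢.dist q₁ p₂ := tri hc p₁ q₁ p₂
  have td : 𝒢.dist q₁ p₂ ≤ 𝒢.dist q₁ q₂ + 𝒢.dist q₂ p₂ := tri hc q₁ q₂ p₂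
  have te : 𝒢.dist q₁ q₂ ≤ 𝒢.dist q₁ x + 𝒢.dist x q₂ := tri hc q₁ x q₂
  have tf : 𝒢.dist p₁ q₂ ≤ 𝒢.dist p₁ q₁ + 𝒢.dist q₁ q₂ := tri hc p₁ q₁ q₂
  have tg : 𝒢.dist p₁ p₂ ≤ 𝒢.dist p₁ q₂ + 𝒢.dist q₂ p₂ := tri hc p₁ q₂ p₂
  have e1 : 𝒢.dist p₁ q₁ = 1 := adj1 hpq1
  have e2 : 𝒢.dist q₂ p₂ = 1 := adj1 hpq2
  have hd1 : 𝒢.dist p₁ p₂ = 𝒢.dist q₁ q₂ + 2 := by omega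
  have hd2 : 𝒢.dist p₁ q₂ = 𝒢.dist q₁ q₂ + 1 := by omega
  have hd3 : 𝒢.dist q₁ p₂ = 𝒢.dist q₁ q₂ + 1 := by omega
  have cm1 := dc 𝒢 p₂ p₁
  have cm2 := dc 𝒢 p₂ q₁
  have cm3 := dc 𝒢 q₂ p₁
  have cm4 := dc 𝒢 q₂ q₁
  have cm5 := dc 𝒢 q₁ q₂
  rcases Sym2.eq_iff.mp hXY.symm with ⟨hX1, hY1⟩ | ⟨hX1, hY1⟩
  · subst hX1; subst hY1; omega
  · subst hX1; subst hY1; omega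
section Action

open Pointwise

variable {Γ : Type*} [Group Γ] [MulAction Γ V]

/-- The graph homomorphism given by the action of `g`. -/
def actHom (hact : ∀ (g : Γ) (u v : V), 𝒢.Adj u v ↔ 𝒢.Adj (g • u) (g • v)) (g : Γ) :
    𝒢 →g 𝒢 :=
  ⟨fun v => g • v, fun {u v} h => (hact g u v).mp h⟩

lemma dist_smul (hact : ∀ (g : Γ) (u v : V), 𝒢.Adj u v ↔ 𝒢.Adj (g • u) (g • v)) (hc : 𝒢.Connected) (g : Γ) (u v : V) :
    𝒢.dist (g • u) (g • v) = 𝒢.dist u v := by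
  have key : ∀ (g : Γ) (u v : V), 𝒢.dist (g • u) (g • v) ≤ 𝒢.dist u v := by
    intro g u v
    obtain ⟨p, hp⟩ := hc.exists_walk_length_eq_dist u v
    have h := SimpleGraph.dist_le (p.map (actHom hact g))
    rwa [SimpleGraph.Walk.length_map, hp] at h
  refine le_antisymm (key g u v) ?_
  have h := key g⁻¹ (g • u) (g • v)
  simpa [inv_smul_smul] using h

lemma so_smul (hact : ∀ (g : Γ) (u v : V), 𝒢.Adj u v ↔ 𝒢.Adj (g • u) (g • v)) (g : Γ) {e f : Sym2 V} (h : SquareOpposite 𝒢 e f) :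
    SquareOpposite 𝒢 (Sym2.map (fun v => g • v) e) (Sym2.map (fun v => g • v) f) := by
  obtain ⟨a, b, c, d, h1, h2, h3, h4, h5, h6, hab, hcd, hac, hbd, he, hf⟩ := h
  refine ⟨g • a, g • b, g • c, g • d,
    fun hcon => h1 (smul_left_cancel g hcon),
    fun hcon => h2 (smul_left_cancel g hcon),
    fun hcon => h3 (smul_left_cancel g hcon),
    fun hcon => h4 (smul_left_cancel g hcon),
    fun hcon => h5 (smul_left_cancel g hcon),
    fun hcon => h6 (smul_left_cancel g hcon),
    (hact g a b).mp hab, (hact g c d).mp hcd, (hact g a c).mp hac, (hact g b d).mp hbd,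
    ?_, ?_⟩
  · rw [he, Sym2.map_pair_eq]
  · rw [hf, Sym2.map_pair_eq]

lemma eqvgen_smul (hact : ∀ (g : Γ) (u v : V), 𝒢.Adj u v ↔ 𝒢.Adj (g • u) (g • v)) (g : Γ) {e f : Sym2 V} (h : Relation.EqvGen (SquareOpposite 𝒢) e f) :
    Relation.EqvGen (SquareOpposite 𝒢)
      (Sym2.map (fun v => g • v) e) (Sym2.map (fun v => g • v) f) := by
  induction h with
  | rel x y hxy => exact Relation.EqvGen.rel _ _ (so_smul hact g hxy)
  | refl x => exact Relation.EqvGen.refl _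
  | symm x y _ ih => exact Relation.EqvGen.symm _ _ ih
  | trans x y z _ _ ih1 ih2 => exact Relation.EqvGen.trans _ _ _ ih1 ih2

lemma map_smul_cancel (g : Γ) (e : Sym2 V) :
    Sym2.map (fun v => g⁻¹ • v) (Sym2.map (fun v => g • v) e) = e := by
  rw [Sym2.map_map]
  have h : ((fun v : V => g⁻¹ • v) ∘ fun v : V => g • v) = id :=
    funext fun v => inv_smul_smul g v
  rw [h, Sym2.map_id, id_eq]

lemma map_smul_cancel' (g : Γ) (e : Sym2 V) :
    Sym2.map (fun v => g • v) (Sym2.map (fun v => g⁻¹ • v) e) = e := by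
  have h := map_smul_cancel (g := g⁻¹) e
  rwa [inv_inv] at h

lemma cls_smul (hact : ∀ (g : Γ) (u v : V), 𝒢.Adj u v ↔ 𝒢.Adj (g • u) (g • v)) (g : Γ) (e : Sym2 V) :
    cls 𝒢 (Sym2.map (fun v => g • v) e) = hypImage g (cls 𝒢 e) := by
  ext f
  constructor
  · intro hf
    refine ⟨Sym2.map (fun v => g⁻¹ • v) f, ?_, map_smul_cancel' g f⟩
    have h := eqvgen_smul hact g⁻¹ hf
    rwa [map_smul_cancel g e] at h
  · rintro ⟨f₀, hf₀, rfl⟩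
    exact eqvgen_smul hact g hf₀

lemma hypImage_one (H : Set (Sym2 V)) : hypImage (1 : Γ) H = H := by
  unfold hypImage
  have h : (fun v : V => (1 : Γ) • v) = id := funext fun v => one_smul _ _
  rw [h, Sym2.map_id, Set.image_id]

lemma hypImage_comp (g h : Γ) (H : Set (Sym2 V)) :
    hypImage g (hypImage h H) = hypImage (g * h) H := by
  unfold hypImage
  rw [← Set.image_comp]
  congr 1
  funext e
  simp only [Function.comp_apply, Sym2.map_map]
  congr 1
  funext v
  simp [Function.comp_apply, mul_smul]

/-- Separation induction along a word in the generators. -/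
lemma sep (hG : MedianGraph 𝒢) (hact : ∀ (g : Γ) (u v : V), 𝒢.Adj u v ↔ 𝒢.Adj (g • u) (g • v)) (x₀ : V) (γw : ∀ s : Γ, 𝒢.Walk x₀ (s • x₀))
    (hγwlen : ∀ s : Γ, (γw s).length = 𝒢.dist x₀ (s • x₀)) (T : Set Γ) :
    ∀ L : List Γ, (∀ s ∈ L, s ∈ T) → ∀ u v : V, 𝒢.Adj u v →
      𝒢.dist x₀ u + 1 = 𝒢.dist x₀ v →
      𝒢.dist (L.prod • x₀) v + 1 = 𝒢.dist (L.prod • x₀) u →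
      ∃ g : Γ, ∃ s ∈ T, ∃ e ∈ (γw s).edges, cls 𝒢 s(u, v) = hypImage g (cls 𝒢 e) := by
  have hc := hG.1
  intro L
  induction L with
  | nil =>
    intro _ u v _ h1 h2
    rw [List.prod_nil, one_smul] at h2
    omega
  | cons s L' IH =>
    intro hmem u v huv h1 h2
    have hsT : s ∈ T := hmem s List.mem_cons_self
    rcases side_dichotomy hG huv (s • x₀) with hy | hy
    · -- s • x₀ is still on the u-side : translate by s⁻¹ and recurse
      have e1 : 𝒢.dist x₀ (s⁻¹ • u) = 𝒢.dist (s • x₀) u := by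
        conv_lhs => rw [← inv_smul_smul s x₀]
        exact dist_smul hact hc s⁻¹ _ _
      have e2 : 𝒢.dist x₀ (s⁻¹ • v) = 𝒢.dist (s • x₀) v := by
        conv_lhs => rw [← inv_smul_smul s x₀]
        exact dist_smul hact hc s⁻¹ _ _
      have e3 : 𝒢.dist (L'.prod • x₀) (s⁻¹ • u) = 𝒢.dist ((s * L'.prod) • x₀) u := by
        conv_rhs => rw [mul_smul, ← dist_smul hact hc s⁻¹, inv_smul_smul]
      have e4 : 𝒢.dist (L'.prod • x₀) (s⁻¹ • v) = 𝒢.dist ((s * L'.prod) • x₀) v := by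
        conv_rhs => rw [mul_smul, ← dist_smul hact hc s⁻¹, inv_smul_smul]
      rw [List.prod_cons] at h2
      have huv' : 𝒢.Adj (s⁻¹ • u) (s⁻¹ • v) := (hact s⁻¹ u v).mp huv
      obtain ⟨g, s', hs'T, e, he, hclseq⟩ :=
        IH (fun t ht => hmem t (List.mem_cons_of_mem s ht)) (s⁻¹ • u) (s⁻¹ • v) huv'
          (by omega) (by omega)
      refine ⟨s * g, s', hs'T, e, he, ?_⟩
      have hrepr : s(u, v) = Sym2.map (fun z => s • z) s(s⁻¹ • u, s⁻¹ • v) := by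
        rw [Sym2.map_pair_eq, smul_inv_smul, smul_inv_smul]
      rw [hrepr, cls_smul hact, hclseq, hypImage_comp]
    · -- the wall separates x₀ from s • x₀ : a flip edge on the chosen geodesic
      obtain ⟨p, q, hpq, hmemE, hnp, hq, -⟩ :=
        exists_flip hc (fun z => 𝒢.dist z v + 1 = 𝒢.dist z u) (γw s) (hγwlen s)
          (by show ¬(𝒢.dist x₀ v + 1 = 𝒢.dist x₀ u); omega) hy
      have hnp' : ¬(𝒢.dist p v + 1 = 𝒢.dist p u) := hnp
      have hq' : 𝒢.dist q v + 1 = 𝒢.dist q u := hq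
      have hpside : 𝒢.dist p u + 1 = 𝒢.dist p v := by
        rcases side_dichotomy hG huv p with h | h
        · exact h
        · exact absurd h hnp'
      obtain ⟨c1, c2⟩ := crossing_pattern hG huv hpq hpside hq'
      have hEA := eqvgen_of_crossing hG huv (𝒢.dist p u) p q hpq rfl (by omega) (by omega)
        (by omega)
      refine ⟨1, s, hsT, s(p, q), hmemE, ?_⟩
      rw [cls_eq_of_eqvgen hEA, hypImage_one]

end Action
end MGproof

open MGproof in
/-- For a finitely generated group acting on a median graph, the convex hull of an
orbit is invariant and carries finitely many orbits of hyperplanes. -/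
theorem convex_hull_orbit_invariant_finitely_many_hyperplane_orbits {V : Type*}
    (𝒢 : SimpleGraph V) (hG : MedianGraph 𝒢)
    {Γ : Type*} [Group Γ] [Group.FG Γ] [MulAction Γ V]
    (hact : ∀ (g : Γ) (u v : V), 𝒢.Adj u v ↔ 𝒢.Adj (g • u) (g • v))
    (x₀ : V) (C : Set V)
    (hC : C = ⋂₀ {S : Set V | ConvexSet 𝒢 S ∧ MulAction.orbit Γ x₀ ⊆ S}) :
    (∀ g : Γ, ∀ v ∈ C, g • v ∈ C) ∧
      ∃ F : Finset (Set (Sym2 V)), (∀ H ∈ F, IsHyperplane 𝒢 H) ∧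
        ∀ H : Set (Sym2 V), IsHyperplane 𝒢 H → (∃ e ∈ H, ∀ v : V, v ∈ e → v ∈ C) →
          ∃ g : Γ, ∃ H₀ ∈ F, H = hypImage g H₀ := by
  classical
  open Pointwise in
  have hc : 𝒢.Connected := hG.1
  constructor
  · -- C is invariant
    intro g v hv
    rw [hC] at hv ⊢
    intro S hS
    obtain ⟨hSconv, hSorb⟩ := hS
    have hS' : ConvexSet 𝒢 ((fun w => g • w) ⁻¹' S) ∧
        MulAction.orbit Γ x₀ ⊆ (fun w => g • w) ⁻¹' S := by
      constructor
      · intro a ha b hb p hp x hx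
        have hlen : (p.map (actHom hact g)).length = 𝒢.dist (g • a) (g • b) := by
          rw [SimpleGraph.Walk.length_map, hp, dist_smul hact hc]
        have hxmem : (g • x) ∈ (p.map (actHom hact g)).support := by
          rw [SimpleGraph.Walk.support_map]
          exact List.mem_map.mpr ⟨x, hx, rfl⟩
        exact hSconv (g • a) ha (g • b) hb (p.map (actHom hact g)) hlen (g • x) hxmem
      · intro w hw
        obtain ⟨γ, rfl⟩ := MulAction.mem_orbit_iff.mp hw
        show g • γ • x₀ ∈ S
        rw [smul_smul]
        exact hSorb (MulAction.mem_orbit x₀ (g * γ))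
    exact Set.mem_sInter.mp hv _ hS'
  · -- finitely many hyperplane orbits
    obtain ⟨S₀, hS₀top, hS₀fin⟩ := Group.fg_iff.mp (inferInstance : Group.FG Γ)
    set T : Set Γ := S₀ ∪ S₀⁻¹ with hT
    have hTfin : T.Finite := hS₀fin.union hS₀fin.inv
    choose γw hγwlen using fun s : Γ => hc.exists_walk_length_eq_dist x₀ (s • x₀)
    have hFfin : (⋃ s ∈ T, (fun e => cls 𝒢 e) '' {e | e ∈ (γw s).edges}).Finite :=
      hTfin.biUnion fun s _ => ((γw s).edges.finite_toSet).image _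
    refine ⟨hFfin.toFinset, ?_, ?_⟩
    · intro H hH
      rw [Set.Finite.mem_toFinset] at hH
      simp only [Set.mem_iUnion, Set.mem_image, Set.mem_setOf_eq] at hH
      obtain ⟨s, hs, e, he, rfl⟩ := hH
      exact ⟨e, (γw s).edges_subset_edgeSet he, rfl⟩
    · rintro H ⟨e₀, he₀, rfl⟩ ⟨e, heH, heC⟩
      have heE : e ∈ 𝒢.edgeSet := (edge_mem_of_eqvgen heH).mp he₀
      have hHe : {f | Relation.EqvGen (SquareOpposite 𝒢) e₀ f} = cls 𝒢 e :=
        cls_eq_of_eqvgen heH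
      have hrep : ∃ u v : V, e = s(u, v) := by
        induction e using Sym2.ind with
        | _ u v => exact ⟨u, v, rfl⟩
      obtain ⟨u, v, rfl⟩ := hrep
      have huv : 𝒢.Adj u v := heE
      have hu : u ∈ C := heC u (by rw [Sym2.mem_iff]; left; rfl)
      have hv : v ∈ C := heC v (by rw [Sym2.mem_iff]; right; rfl)
      -- the orbit meets both sides of the wall (u, v)
      have horb1 : ∃ g₁ : Γ, 𝒢.dist (g₁ • x₀) u + 1 = 𝒢.dist (g₁ • x₀) v := by
        by_contra hno
        push_neg at hno
        have hCsub : C ⊆ {w : V | 𝒢.dist w v + 1 = 𝒢.dist w u} := by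
          rw [hC]
          refine Set.sInter_subset_of_mem ⟨halfspace_convex hG huv.symm, ?_⟩
          intro w hw
          obtain ⟨γ, rfl⟩ := MulAction.mem_orbit_iff.mp hw
          rcases side_dichotomy hG huv (γ • x₀) with h | h
          · exact absurd h (hno γ)
          · exact h
        have h1 := hCsub hu
        simp only [Set.mem_setOf_eq] at h1
        have h2 : 𝒢.dist u u = 0 := SimpleGraph.dist_self
        omega
      have horb2 : ∃ g₂ : Γ, 𝒢.dist (g₂ • x₀) v + 1 = 𝒢.dist (g₂ • x₀) u := by
        by_contra hno
        push_neg at hno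
        have hCsub : C ⊆ {w : V | 𝒢.dist w u + 1 = 𝒢.dist w v} := by
          rw [hC]
          refine Set.sInter_subset_of_mem ⟨halfspace_convex hG huv, ?_⟩
          intro w hw
          obtain ⟨γ, rfl⟩ := MulAction.mem_orbit_iff.mp hw
          rcases side_dichotomy hG huv (γ • x₀) with h | h
          · exact h
          · exact absurd h (hno γ)
        have h1 := hCsub hv
        simp only [Set.mem_setOf_eq] at h1
        have h2 : 𝒢.dist v v = 0 := SimpleGraph.dist_self
        omega
      obtain ⟨g₁, hg₁⟩ := horb1
      obtain ⟨g₂, hg₂⟩ := horb2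
      -- decompose g₁⁻¹ * g₂ as a word in T
      have hword : ∃ L : List Γ, (∀ y ∈ L, y ∈ T) ∧ L.prod = g₁⁻¹ * g₂ := by
        have hmemtop : g₁⁻¹ * g₂ ∈ Subgroup.closure S₀ := by rw [hS₀top]; trivial
        have hmem2 : g₁⁻¹ * g₂ ∈ Submonoid.closure (S₀ ∪ S₀⁻¹) := by
          rw [← Subgroup.closure_toSubmonoid]
          exact hmemtop
        exact Submonoid.exists_list_of_mem_closure hmem2
      obtain ⟨L, hLT, hLprod⟩ := hword
      -- translated wall
      have huv' : 𝒢.Adj (g₁⁻¹ • u) (g₁⁻¹ • v) := (hact g₁⁻¹ u v).mp huv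
      have e1 : 𝒢.dist x₀ (g₁⁻¹ • u) = 𝒢.dist (g₁ • x₀) u := by
        conv_lhs => rw [← inv_smul_smul g₁ x₀]
        exact dist_smul hact hc g₁⁻¹ _ _
      have e2 : 𝒢.dist x₀ (g₁⁻¹ • v) = 𝒢.dist (g₁ • x₀) v := by
        conv_lhs => rw [← inv_smul_smul g₁ x₀]
        exact dist_smul hact hc g₁⁻¹ _ _
      have e3 : 𝒢.dist (L.prod • x₀) (g₁⁻¹ • u) = 𝒢.dist (g₂ • x₀) u := by
        rw [hLprod, mul_smul]
        conv_rhs => rw [← dist_smul hact hc g₁⁻¹ (g₂ • x₀) u]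
      have e4 : 𝒢.dist (L.prod • x₀) (g₁⁻¹ • v) = 𝒢.dist (g₂ • x₀) v := by
        rw [hLprod, mul_smul]
        conv_rhs => rw [← dist_smul hact hc g₁⁻¹ (g₂ • x₀) v]
      obtain ⟨g, s, hsT, e', he', hclseq⟩ :=
        sep hG hact x₀ γw hγwlen T L hLT (g₁⁻¹ • u) (g₁⁻¹ • v) huv' (by omega) (by omega)
      refine ⟨g₁ * g, cls 𝒢 e', ?_, ?_⟩
      · rw [Set.Finite.mem_toFinset]
        exact Set.mem_biUnion hsT ⟨e', he', rfl⟩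
      · rw [hHe]
        have hrepr : s(u, v) = Sym2.map (fun z => g₁ • z) s(g₁⁻¹ • u, g₁⁻¹ • v) := by
          rw [Sym2.map_pair_eq, smul_inv_smul, smul_inv_smul]
        rw [hrepr, cls_smul hact, hclseq, hypImage_comp]
end
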